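/- arXiv:2409.20211 — 2 statements merged into one kernel-verified Lean document; each statement's English description precedes it below -/
import Mathlib

section
/- Let f be a symmetric Boolean function in n variables of algebraic degree r with 2 ≤ r ≤ n-2. (i) If r is even, then f has no degree-drop hyperplane. (ii) If r is odd, then f has exactly one degree-drop linear hyperplane, namely the hyperplane of equation x_1 + x_2 + ⋯ + x_n = 0. -/
open Finset

/-- A Boolean function in `n` variables. -/
abbrev BF (n : ℕ) := (Fin n → ZMod 2) → ZMod 2

/-- The coefficient, in the algebraic normal form of `f`, of the monomial whose
set of variables is `S` (computed by the Möbius/binary Möbius transform). -/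
def anf {n : ℕ} (f : BF n) (S : Finset (Fin n)) : ZMod 2 :=
  ∑ T ∈ S.powerset, f (fun i => if i ∈ T then 1 else 0)

/-- The algebraic degree of a Boolean function, with `⊥` (i.e. `-∞`) for the zero function. -/
def degB {n : ℕ} (f : BF n) : WithBot ℕ :=
  (Finset.univ.filter (fun S : Finset (Fin n) => anf f S ≠ 0)).sup
    (fun S => (S.card : WithBot ℕ))

/-- `f` is homogeneous of degree `r`: all monomials of its ANF have degree `r`. -/
def Homog {n : ℕ} (f : BF n) (r : ℕ) : Prop :=
  ∀ S : Finset (Fin n), anf f S ≠ 0 → S.card = r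

/-- `φ` is an affine map. -/
def IsAffineMap {n m : ℕ} (φ : (Fin m → ZMod 2) → (Fin n → ZMod 2)) : Prop :=
  ∃ (L : (Fin m → ZMod 2) →ₗ[ZMod 2] (Fin n → ZMod 2)) (b : Fin n → ZMod 2),
    φ = fun x => L x + b

/-- `A` is a degree-drop affine subspace of co-dimension `k` for `f` : `A` is the range of an
injective affine parametrization `φ` defined on `F_2^{n-k}`, and the restriction `f|_A`,
viewed as the Boolean function `f ∘ φ` in `n-k` variables, has degree `< deg f`. -/
def DegreeDropSet {n : ℕ} (f : BF n) (k : ℕ) (A : Set (Fin n → ZMod 2)) : Prop :=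
  ∃ φ : (Fin (n - k) → ZMod 2) → (Fin n → ZMod 2),
    IsAffineMap φ ∧ Function.Injective φ ∧ Set.range φ = A ∧ degB (f ∘ φ) < degB f

/-- `f` has some degree-drop affine subspace of co-dimension `k`. -/
def HasDDS {n : ℕ} (f : BF n) (k : ℕ) : Prop :=
  ∃ A : Set (Fin n → ZMod 2), DegreeDropSet f k A

/-- `SimEq r f g` is the relation `f ∼_{r-1} g` : there are an invertible affine
transformation `x ↦ L x + b` of `F_2^n` and a Boolean function `h` of degree at most `r-1`
such that `g = f ∘ φ + h`. -/
def SimEq {n : ℕ} (r : ℕ) (f g : BF n) : Prop :=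
  ∃ (L : (Fin n → ZMod 2) ≃ₗ[ZMod 2] (Fin n → ZMod 2)) (b : Fin n → ZMod 2) (h : BF n),
    degB h ≤ ((r - 1 : ℕ) : WithBot ℕ) ∧ g = fun x => f (L x + b) + h x

/-- The complement `f^c` of a (homogeneous) Boolean function: each monomial `m` of the ANF
is replaced by the monomial on the complementary set of variables. -/
def bcompl {n : ℕ} (f : BF n) : BF n :=
  fun x => ∑ S ∈ Finset.univ.filter (fun S : Finset (Fin n) => anf f S ≠ 0), ∏ i ∈ Sᶜ, x i

/-- Discrete derivative of `f` in direction `a`. -/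
def deriv1 {n : ℕ} (a : Fin n → ZMod 2) (f : BF n) : BF n :=
  fun x => f (x + a) + f x

/-- `a` is a fast point of `f` : `a ≠ 0` and `deg (D_a f) < deg f - 1`. -/
def FastPoint {n : ℕ} (f : BF n) (a : Fin n → ZMod 2) : Prop :=
  a ≠ 0 ∧ degB (deriv1 a f) + 1 < degB f

/-- Membership in `K_{k,r,n}` : `f` is a nonzero homogeneous Boolean function of degree `r`
in `n` variables with no degree-drop affine subspace of co-dimension `k`. -/
def memK {n : ℕ} (k r : ℕ) (f : BF n) : Prop :=
  Homog f r ∧ degB f = (r : WithBot ℕ) ∧ ¬ HasDDS f k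

/-- The restriction degree stability of `f` : the largest `k` such that `f` has no
degree-drop affine subspace of co-dimension `k`. -/
noncomputable def degStab {n : ℕ} (f : BF n) : ℕ :=
  sSup {k : ℕ | ¬ HasDDS f k}

/-- `deg_stab(r,n)` : the maximum of `degStab f` over all Boolean functions `f` of
degree `r` in `n` variables. -/
noncomputable def degStabRN (r n : ℕ) : ℕ :=
  sSup {d : ℕ | ∃ f : BF n, degB f = (r : WithBot ℕ) ∧ d = degStab f}

/-- `g` depends only on the variables in `S`. -/
def DependsOnlyOn {n : ℕ} (g : BF n) (S : Finset (Fin n)) : Prop :=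
  ∀ x y : Fin n → ZMod 2, (∀ i ∈ S, x i = y i) → g x = g y

/-- `rank_{r-1}(f)` : the minimum `m` such that some Boolean function `g` depending on only
`m` of the variables satisfies `f ∼_{r-1} g`. -/
noncomputable def rankB {n : ℕ} (r : ℕ) (f : BF n) : ℕ :=
  sInf {m : ℕ | ∃ g : BF n, SimEq r f g ∧
    ∃ S : Finset (Fin n), S.card = m ∧ DependsOnlyOn g S}

/-- Iterated discrete derivative `D_{a_1}(D_{a_2}(⋯ D_{a_k} f))` along a list of directions. -/
def derivList {n : ℕ} : List (Fin n → ZMod 2) → BF n → BF n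
  | [], f => f
  | a :: l, f => deriv1 a (derivList l f)

namespace S15aux

open Finset

variable {n m k : ℕ}

/-- indicator of a finset -/
def ind {m : ℕ} (T : Finset (Fin m)) : Fin m → ZMod 2 := fun i => if i ∈ T then 1 else 0

lemma zmod2_cases (b : ZMod 2) : b = 0 ∨ b = 1 := by
  revert b; decide

lemma zmod2_add_self (b : ZMod 2) : b + b = 0 := by revert b; decide

lemma ind_filter {m : ℕ} (T : Finset (Fin m)) :
    Finset.univ.filter (fun i => ind T i = 1) = T := by
  ext i
  simp only [ind, mem_filter, mem_univ, true_and]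
  by_cases h : i ∈ T <;> simp [h]

lemma eq_ind_supp {m : ℕ} (x : Fin m → ZMod 2) :
    x = ind (Finset.univ.filter (fun i => x i = 1)) := by
  funext i
  simp only [ind, mem_filter, mem_univ, true_and]
  rcases zmod2_cases (x i) with h | h <;> simp [h]

lemma anf_eq {m : ℕ} (g : BF m) (S : Finset (Fin m)) :
    anf g S = ∑ T ∈ S.powerset, g (ind T) := rfl

/-- Möbius inversion over F₂. -/
lemma mobius {m : ℕ} (g : BF m) (x : Fin m → ZMod 2) :
    g x = ∑ S : Finset (Fin m), anf g S * ∏ i ∈ S, x i := by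
  classical
  set U : Finset (Fin m) := Finset.univ.filter (fun i => x i = 1) with hU
  have hxU : x = ind U := eq_ind_supp x
  have hprod : ∀ S : Finset (Fin m), (∏ i ∈ S, x i) = if S ⊆ U then 1 else 0 := by
    intro S
    by_cases h : S ⊆ U
    · rw [if_pos h]
      apply Finset.prod_eq_one
      intro i hi
      have : i ∈ U := h hi
      simp only [hU, mem_filter] at this
      exact this.2
    · rw [if_neg h]
      obtain ⟨i, hiS, hiU⟩ := Finset.not_subset.mp h
      apply Finset.prod_eq_zero hiS
      rcases zmod2_cases (x i) with h0 | h1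
      · exact h0
      · exact absurd (by simp [hU, h1]) hiU
  calc g x = ∑ S ∈ U.powerset, anf g S := by
        rw [eq_comm]
        have h1 : ∑ S ∈ U.powerset, anf g S
            = ∑ S ∈ U.powerset, ∑ T ∈ U.powerset, (if T ⊆ S then g (ind T) else 0) := by
          apply Finset.sum_congr rfl
          intro S hS
          rw [Finset.mem_powerset] at hS
          rw [anf_eq]
          rw [← Finset.sum_filter]
          apply Finset.sum_congr _ (fun _ _ => rfl)
          ext T
          simp only [Finset.mem_powerset, Finset.mem_filter]
          constructor
          · intro h; exact ⟨h.trans hS, h⟩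
          · intro h; exact h.2
        rw [h1, Finset.sum_comm]
        have h2 : ∀ T ∈ U.powerset,
            (∑ S ∈ U.powerset, if T ⊆ S then g (ind T) else 0)
            = (2 ^ (U.card - T.card)) • g (ind T) := by
          intro T hT
          rw [Finset.mem_powerset] at hT
          rw [← Finset.sum_filter, Finset.sum_const]
          congr 1
          -- card of {S ⊆ U | T ⊆ S} = 2 ^ (U.card - T.card)
          have : (Finset.filter (fun S => T ⊆ S) U.powerset).card
              = ((U \ T).powerset).card := by
            apply Finset.card_nbij' (fun S => S \ T) (fun R => R ∪ T)
            · intro S hS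
              simp only [Finset.mem_coe, Finset.mem_filter, Finset.mem_powerset] at hS ⊢
              exact Finset.sdiff_subset_sdiff hS.1 (Finset.Subset.refl T)
            · intro R hR
              simp only [Finset.mem_coe, Finset.mem_filter, Finset.mem_powerset] at hR ⊢
              constructor
              · exact Finset.union_subset (hR.trans (Finset.sdiff_subset)) hT
              · exact Finset.subset_union_right
            · intro S hS
              simp only [Finset.mem_coe, Finset.mem_filter, Finset.mem_powerset] at hS
              exact Finset.sdiff_union_of_subset hS.2
            · intro R hR
              simp only [Finset.mem_coe, Finset.mem_powerset] at hR
              have hdisj : Disjoint R T := by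
                apply Finset.disjoint_of_subset_left hR
                exact Finset.sdiff_disjoint
              beta_reduce
              rw [Finset.union_sdiff_distrib, Finset.sdiff_self, Finset.union_empty,
                Finset.sdiff_eq_self_of_disjoint hdisj]
          rw [this, Finset.card_powerset, Finset.card_sdiff_of_subset hT]
        rw [Finset.sum_congr rfl h2]
        rw [Finset.sum_eq_single U]
        · rw [Nat.sub_self, pow_zero, one_smul, ← hxU]
        · intro T hT hTne
          rw [Finset.mem_powerset] at hT
          have hlt : T.card < U.card := Finset.card_lt_card (lt_of_le_of_ne hT hTne)
          have hpos : 0 < U.card - T.card := Nat.sub_pos_of_lt hlt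
          obtain ⟨j, hj⟩ : ∃ j, U.card - T.card = j + 1 := ⟨U.card - T.card - 1, by omega⟩
          rw [hj, pow_succ, mul_comm, mul_smul, two_smul]
          exact zmod2_add_self _
        · intro h; exact absurd (Finset.mem_powerset.mpr (Finset.Subset.refl U)) h
    _ = ∑ S : Finset (Fin m), anf g S * ∏ i ∈ S, x i := by
        rw [eq_comm]
        calc ∑ S : Finset (Fin m), anf g S * ∏ i ∈ S, x i
            = ∑ S : Finset (Fin m), (if S ⊆ U then anf g S else 0) := by
              apply Finset.sum_congr rfl
              intro S _
              rw [hprod S]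
              by_cases h : S ⊆ U <;> simp [h]
          _ = ∑ S ∈ Finset.univ.filter (fun S => S ⊆ U), anf g S := by
              rw [Finset.sum_filter]
          _ = ∑ S ∈ U.powerset, anf g S := by
              apply Finset.sum_congr _ (fun _ _ => rfl)
              ext S; simp [Finset.mem_powerset]

lemma degB_le_iff {m : ℕ} (g : BF m) (d : ℕ) :
    degB g ≤ (d : WithBot ℕ) ↔ ∀ S : Finset (Fin m), anf g S ≠ 0 → S.card ≤ d := by
  unfold degB
  rw [Finset.sup_le_iff]
  constructor
  · intro h S hS
    have := h S (by simp [hS])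
    rwa [Nat.cast_le] at this
  · intro h S hS
    simp only [Finset.mem_filter] at hS
    exact_mod_cast Nat.cast_le.mpr (h S hS.2)

end S15aux

namespace S15aux

open Finset

lemma pi_add_self {k : ℕ} (a : Fin k → ZMod 2) : a + a = 0 := by
  funext i; exact zmod2_add_self (a i)

/-- Key lemma: the sum of a Boolean function of degree ≤ d over the image of
an affine map from F₂^k, k > d, vanishes. -/
lemma sum_comp_affine {m k d : ℕ} (g : BF m) (hd : degB g ≤ (d : WithBot ℕ)) (hk : d < k)
    (L : (Fin k → ZMod 2) →ₗ[ZMod 2] (Fin m → ZMod 2)) (b : Fin m → ZMod 2) :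
    ∑ z : Fin k → ZMod 2, g (L z + b) = 0 := by
  classical
  have hmob : ∀ z : Fin k → ZMod 2, g (L z + b)
      = ∑ S : Finset (Fin m), anf g S * ∏ i ∈ S, (L z + b) i :=
    fun z => mobius g _
  rw [Finset.sum_congr rfl fun z _ => hmob z, Finset.sum_comm]
  apply Finset.sum_eq_zero
  intro S _
  by_cases hS : anf g S = 0
  · simp [hS]
  have hcard : S.card ≤ d := (degB_le_iff g d).mp hd S hS
  obtain ⟨a, ha0, haS⟩ : ∃ a : Fin k → ZMod 2, a ≠ 0 ∧ ∀ i ∈ S, (L a) i = 0 := by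
    set Λ : (Fin k → ZMod 2) →ₗ[ZMod 2] ({ x // x ∈ S } → ZMod 2) :=
      LinearMap.pi (fun i => (LinearMap.proj (i : Fin m)).comp L) with hΛ
    have hker : LinearMap.ker Λ ≠ ⊥ := by
      intro hbot
      have hinj : Function.Injective Λ := LinearMap.ker_eq_bot.mp hbot
      have h1 := LinearMap.finrank_le_finrank_of_injective hinj
      rw [Module.finrank_fintype_fun_eq_card, Module.finrank_fintype_fun_eq_card] at h1
      rw [Fintype.card_coe, Fintype.card_fin] at h1
      omega
    obtain ⟨a, haK, ha0⟩ := Submodule.exists_mem_ne_zero_of_ne_bot hker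
    refine ⟨a, ha0, fun i hi => ?_⟩
    have h0 : Λ a = 0 := haK
    have h1 := congrFun h0 ⟨i, hi⟩
    simpa [hΛ, LinearMap.pi_apply] using h1
  apply Finset.sum_involution (fun z _ => z + a)
  · intro z _
    have hPP : (∏ i ∈ S, (L (z + a) + b) i) = ∏ i ∈ S, (L z + b) i := by
      apply Finset.prod_congr rfl
      intro i hi
      simp only [map_add, Pi.add_apply, haS i hi]
      ring
    rw [hPP]
    exact zmod2_add_self _
  · intro z _ _
    intro h
    apply ha0
    have := congrFun h
    funext i
    have h2 := this i
    simp only [Pi.add_apply] at h2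
    have := add_eq_left.mp h2
    simpa using this
  · intro z _; exact Finset.mem_univ _
  · intro z _
    rw [add_assoc, pi_add_self, add_zero]

end S15aux

namespace S15aux

open Finset

lemma sum_powerset_card {α : Type*} (S : Finset α) (G : ℕ → ZMod 2) :
    ∑ T ∈ S.powerset, G T.card
      = ∑ j ∈ Finset.range (S.card + 1), (Nat.choose S.card j : ZMod 2) * G j := by
  rw [Finset.sum_powerset]
  apply Finset.sum_congr rfl
  intro j hj
  have h : ∀ T ∈ Finset.powersetCard j S, G T.card = G j := by
    intro T hT; rw [(Finset.mem_powersetCard.mp hT).2]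
  rw [Finset.sum_congr rfl h, Finset.sum_const, Finset.card_powersetCard, nsmul_eq_mul]

lemma binom_pascal (G : ℕ → ZMod 2) (t : ℕ) :
    ∑ i ∈ Finset.range (t+2), (Nat.choose (t+1) i : ZMod 2) * G i
      = ∑ i ∈ Finset.range (t+1), (Nat.choose t i : ZMod 2) * (G i + G (i+1)) := by
  rw [Finset.sum_range_succ']
  have h1 : ∀ i ∈ Finset.range (t+1), (Nat.choose (t+1) (i+1) : ZMod 2) * G (i+1)
      = (Nat.choose t i : ZMod 2) * G (i+1) + (Nat.choose t (i+1) : ZMod 2) * G (i+1) := by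
    intro i _
    rw [Nat.choose_succ_succ]
    push_cast
    ring
  rw [Finset.sum_congr rfl h1, Finset.sum_add_distrib]
  have h2 : ∑ i ∈ Finset.range (t+1), (Nat.choose t (i+1) : ZMod 2) * G (i+1)
      = ∑ i ∈ Finset.range t, (Nat.choose t (i+1) : ZMod 2) * G (i+1) := by
    rw [Finset.sum_range_succ, Nat.choose_succ_self]
    simp
  have h3 : ∑ i ∈ Finset.range (t+1), (Nat.choose t i : ZMod 2) * (G i + G (i+1))
      = ∑ i ∈ Finset.range (t+1), (Nat.choose t i : ZMod 2) * G i
        + ∑ i ∈ Finset.range (t+1), (Nat.choose t i : ZMod 2) * G (i+1) := by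
    rw [← Finset.sum_add_distrib]
    apply Finset.sum_congr rfl
    intro i _; ring
  have h4 : ∑ i ∈ Finset.range (t+1), (Nat.choose t i : ZMod 2) * G i
      = ∑ i ∈ Finset.range t, (Nat.choose t (i+1) : ZMod 2) * G (i+1)
        + (Nat.choose t 0 : ZMod 2) * G 0 := by
    rw [Finset.sum_range_succ']
  rw [h2, h3, h4]
  simp only [Nat.choose_zero_right, Nat.choose_zero_right, Nat.cast_one, one_mul]
  ring

/-- `DD F k s = ∑_j C(k,j) F(s+j)`. -/
def DD (F : ℕ → ZMod 2) (k s : ℕ) : ZMod 2 :=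
  ∑ j ∈ Finset.range (k+1), (Nat.choose k j : ZMod 2) * F (s + j)

lemma DD_pascal (F : ℕ → ZMod 2) (k s : ℕ) :
    DD F (k+1) s = DD F k s + DD F k (s+1) := by
  unfold DD
  rw [binom_pascal (fun i => F (s + i)) k]
  rw [← Finset.sum_add_distrib]
  apply Finset.sum_congr rfl
  intro i _
  have : s + (i + 1) = s + 1 + i := by omega
  rw [this]
  ring

lemma DD_pascal2 (F : ℕ → ZMod 2) (k s : ℕ) :
    DD F (k+2) s = DD F k s + DD F k (s+2) := by
  have e1 := DD_pascal F (k+1) s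
  have e2 := DD_pascal F k s
  have e3 := DD_pascal F k (s+1)
  have hs : s + 1 + 1 = s + 2 := by omega
  rw [hs] at e3
  have := zmod2_add_self (DD F k (s+1))
  rw [e1, e2, e3]
  linear_combination this

/-- the cube sum operator -/
def SS (F : ℕ → ZMod 2) (e u v : ℕ) : ZMod 2 :=
  ∑ i ∈ Finset.range (u+1), (Nat.choose u i : ZMod 2) * DD F v (i + (i+e) % 2)

lemma SS_eq_double (F : ℕ → ZMod 2) (e u v : ℕ) :
    SS F e u v = ∑ i ∈ Finset.range (u+1), ∑ j ∈ Finset.range (v+1),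
      (Nat.choose u i : ZMod 2) * ((Nat.choose v j : ZMod 2) * F (i + (i+e) % 2 + j)) := by
  unfold SS DD
  apply Finset.sum_congr rfl
  intro i _
  rw [Finset.mul_sum]

lemma SS_step (F : ℕ → ZMod 2) (e u v : ℕ) :
    SS F e (u+2) v = SS F e u (v+2) := by
  unfold SS
  have huu : u + 2 + 1 = (u+1) + 2 := by omega
  rw [huu]
  rw [binom_pascal (fun i => DD F v (i + (i+e) % 2)) (u+1)]
  rw [binom_pascal (fun i => DD F v (i + (i+e) % 2) + DD F v ((i+1) + ((i+1)+e) % 2)) u]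
  apply Finset.sum_congr rfl
  intro i _
  have hidx2 : i + 1 + 1 + (i + 1 + 1 + e) % 2 = (i + (i + e) % 2) + 2 := by omega
  rw [hidx2, DD_pascal2 F v (i + (i+e) % 2)]
  have := zmod2_add_self (DD F v ((i+1) + ((i+1)+e) % 2))
  linear_combination ((Nat.choose u i : ZMod 2)) * this

lemma SS_even (F : ℕ → ZMod 2) (e c v : ℕ) (he : e ≤ 1) :
    SS F e (2*c) v = DD F (2*c+v) e := by
  induction c generalizing v with
  | zero =>
    have hv : 2*0+v = v := by omega
    rw [hv]
    unfold SS
    rw [Finset.sum_range_one]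
    have h0 : 0 + (0 + e) % 2 = e := by omega
    rw [h0]
    norm_num
  | succ c ih =>
    have h1 : 2*(c+1) = 2*c+2 := by ring
    rw [h1, SS_step, ih (v+2)]
    congr 1
    omega

lemma SS_odd0 (F : ℕ → ZMod 2) (c v : ℕ) :
    SS F 0 (2*c+1) v = DD F (2*c+1+v+1) 0 := by
  induction c generalizing v with
  | zero =>
    unfold SS
    rw [Finset.sum_range_succ, Finset.sum_range_one]
    norm_num
    rw [← DD_pascal2 F v 0]
    congr 1
    omega
  | succ c ih =>
    have h1 : 2*(c+1)+1 = (2*c+1)+2 := by ring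
    rw [h1, SS_step, ih (v+2)]
    congr 1
    omega

end S15aux

namespace S15aux

open Finset

lemma exists_perm_of_card_eq {n : ℕ} (T T' : Finset (Fin n)) (h : T.card = T'.card) :
    ∃ π : Equiv.Perm (Fin n), ∀ i, π i ∈ T ↔ i ∈ T' := by
  classical
  have h1 : Fintype.card {x // x ∈ T'} = Fintype.card {x // x ∈ T} := by
    simp only [Fintype.card_coe]; omega
  have h2 : Fintype.card {x : Fin n // ¬ x ∈ T'} = Fintype.card {x : Fin n // ¬ x ∈ T} := by
    rw [Fintype.card_subtype_compl, Fintype.card_subtype_compl]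
    simp only [Fintype.card_coe]; omega
  set e1 := Fintype.equivOfCardEq h1 with he1
  set e2 := Fintype.equivOfCardEq h2 with he2
  refine ⟨(Equiv.sumCompl (· ∈ T')).symm.trans ((e1.sumCongr e2).trans
    (Equiv.sumCompl (· ∈ T))), fun i => ?_⟩
  by_cases hi : i ∈ T'
  · simp only [Equiv.trans_apply, Equiv.sumCompl_symm_apply_of_pos hi,
      Equiv.sumCongr_apply, Sum.map_inl, Equiv.sumCompl_apply_inl]
    exact iff_of_true (e1 ⟨i, hi⟩).2 hi
  · simp only [Equiv.trans_apply, Equiv.sumCompl_symm_apply_of_neg hi,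
      Equiv.sumCongr_apply, Sum.map_inr, Equiv.sumCompl_apply_inr]
    exact iff_of_false (e2 ⟨i, hi⟩).2 hi

/-- value of a symmetric function on points of given weight -/
def Fw {n : ℕ} (f : BF n) (j : ℕ) : ZMod 2 := f (fun i => if (i : ℕ) < j then 1 else 0)

lemma card_canon {n j : ℕ} (hj : j ≤ n) :
    (Finset.univ.filter (fun i : Fin n => (i : ℕ) < j)).card = j := by
  have himg : Finset.univ.filter (fun i : Fin n => (i : ℕ) < j)
      = Finset.image (fun t : Fin j => Fin.castLE hj t) Finset.univ := by
    ext i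
    simp only [mem_filter, mem_univ, true_and, Finset.mem_image]
    constructor
    · intro hi; exact ⟨⟨(i : ℕ), hi⟩, by simp [Fin.castLE, Fin.ext_iff]⟩
    · rintro ⟨t, rfl⟩; exact t.2
  rw [himg, Finset.card_image_of_injective _ (Fin.castLE_injective hj)]
  simp

lemma f_eq_Fw {n : ℕ} (f : BF n)
    (hsym : ∀ π : Equiv.Perm (Fin n), ∀ x : Fin n → ZMod 2, f (x ∘ π) = f x)
    (x : Fin n → ZMod 2) :
    f x = Fw f ((Finset.univ.filter (fun i => x i = 1)).card) := by
  classical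
  set U := Finset.univ.filter (fun i => x i = 1) with hU
  have hjn : U.card ≤ n := by
    have := Finset.card_le_univ U
    simpa using this
  set C := Finset.univ.filter (fun i : Fin n => (i : ℕ) < U.card) with hC
  have hCcard : C.card = U.card := card_canon hjn
  obtain ⟨π, hπ⟩ := exists_perm_of_card_eq C U hCcard
  have hcomp : ind C ∘ π = ind U := by
    funext i
    simp only [Function.comp_apply, ind]
    by_cases hi : i ∈ U
    · rw [if_pos ((hπ i).mpr hi), if_pos hi]
    · rw [if_neg (fun hc => hi ((hπ i).mp hc)), if_neg hi]
  have h1 : f x = f (ind U) := by rw [← eq_ind_supp]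
  have h2 : f (ind U) = f (ind C) := by rw [← hcomp, hsym π (ind C)]
  have h3 : f (ind C) = Fw f U.card := by
    unfold Fw
    congr 1
    funext i
    simp [ind, hC]
  rw [h1, h2, h3]

lemma anf_eq_DD {n : ℕ} (f : BF n)
    (hsym : ∀ π : Equiv.Perm (Fin n), ∀ x : Fin n → ZMod 2, f (x ∘ π) = f x)
    (S : Finset (Fin n)) :
    anf f S = DD (Fw f) S.card 0 := by
  rw [anf_eq]
  have h1 : ∀ T ∈ S.powerset, f (ind T) = Fw f T.card := by
    intro T _
    rw [f_eq_Fw f hsym (ind T), ind_filter]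
  rw [Finset.sum_congr rfl h1, sum_powerset_card]
  unfold DD
  apply Finset.sum_congr rfl
  intro j _
  rw [Nat.zero_add]

lemma c_high_zero {n r : ℕ} (f : BF n)
    (hsym : ∀ π : Equiv.Perm (Fin n), ∀ x : Fin n → ZMod 2, f (x ∘ π) = f x)
    (hdeg : degB f = (r : WithBot ℕ)) :
    ∀ m, r < m → m ≤ n → DD (Fw f) m 0 = 0 := by
  intro m hrm hmn
  obtain ⟨S, -, hScard⟩ := Finset.exists_subset_card_eq
    (s := (Finset.univ : Finset (Fin n))) (n := m) (by simpa using hmn)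
  have h1 : anf f S = DD (Fw f) m 0 := by rw [anf_eq_DD f hsym, hScard]
  by_contra hne
  have h2 : anf f S ≠ 0 := by rw [h1]; exact hne
  have h3 : S.card ≤ r := (degB_le_iff f r).mp (le_of_eq hdeg) S h2
  omega

lemma c_r_ne_zero {n r : ℕ} (f : BF n)
    (hsym : ∀ π : Equiv.Perm (Fin n), ∀ x : Fin n → ZMod 2, f (x ∘ π) = f x)
    (hdeg : degB f = (r : WithBot ℕ)) :
    DD (Fw f) r 0 ≠ 0 := by
  have hne : (Finset.univ.filter (fun S : Finset (Fin n) => anf f S ≠ 0)).Nonempty := by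
    by_contra h
    rw [Finset.not_nonempty_iff_eq_empty] at h
    unfold degB at hdeg
    rw [h] at hdeg
    simp at hdeg
  obtain ⟨S, hSmem, hSsup⟩ := Finset.exists_mem_eq_sup _ hne
    (fun S : Finset (Fin n) => (S.card : WithBot ℕ))
  unfold degB at hdeg
  rw [hSsup] at hdeg
  have hScard : S.card = r := by exact_mod_cast hdeg
  rw [Finset.mem_filter] at hSmem
  have := hSmem.2
  rw [anf_eq_DD f hsym, hScard] at this
  exact this

lemma withbot_lt_coe {x : WithBot ℕ} {r : ℕ} (hr : 1 ≤ r) (h : x < (r : WithBot ℕ)) :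
    x ≤ ((r - 1 : ℕ) : WithBot ℕ) := by
  cases x with
  | bot => exact bot_le
  | coe a =>
    rw [Nat.cast_withBot] at h
    rw [Nat.cast_withBot]
    have ha : a < r := WithBot.coe_lt_coe.mp h
    exact WithBot.coe_le_coe.mpr (by omega)

end S15aux

namespace S15aux

open Finset

lemma natCast_zmod2 (m : ℕ) : (m : ZMod 2) = ((m % 2 : ℕ) : ZMod 2) :=
  (ZMod.natCast_mod m 2).symm

lemma sum_zmod_eq_card {r : ℕ} (A : Finset (Fin r)) (z : Fin r → ZMod 2) :
    ∑ t ∈ A, z t = ((A.filter (fun t => z t = 1)).card : ZMod 2) := by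
  rw [← Finset.sum_filter_add_sum_filter_not A (fun t => z t = 1)]
  have h1 : ∑ t ∈ A.filter (fun t => z t = 1), z t
      = ((A.filter (fun t => z t = 1)).card : ZMod 2) := by
    rw [Finset.sum_congr rfl (fun t ht => (Finset.mem_filter.mp ht).2), Finset.sum_const,
      nsmul_eq_mul, mul_one]
  have h2 : ∑ t ∈ A.filter (fun t => ¬ z t = 1), z t = 0 := by
    apply Finset.sum_eq_zero
    intro t ht
    rcases zmod2_cases (z t) with h | h
    · exact h
    · exact absurd h (Finset.mem_filter.mp ht).2
  rw [h1, h2, add_zero]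

lemma count_pairs {r u v : ℕ} (huv : u + v = r) (G : ℕ → ℕ → ZMod 2) :
    ∑ z : Fin r → ZMod 2,
      G ((Finset.univ.filter (fun t : Fin r => (t : ℕ) < u ∧ z t = 1)).card)
        ((Finset.univ.filter (fun t : Fin r => ¬ (t : ℕ) < u ∧ z t = 1)).card)
    = ∑ i ∈ Finset.range (u+1), ∑ j ∈ Finset.range (v+1),
        (Nat.choose u i : ZMod 2) * ((Nat.choose v j : ZMod 2) * G i j) := by
  classical
  set A := Finset.univ.filter (fun t : Fin r => (t : ℕ) < u) with hA
  set B := Finset.univ.filter (fun t : Fin r => ¬ (t : ℕ) < u) with hB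
  have hAcard : A.card = u := card_canon (by omega)
  have hBcard : B.card = v := by
    have := Finset.card_filter_add_card_filter_not
      (s := (Finset.univ : Finset (Fin r))) (p := fun t : Fin r => (t : ℕ) < u)
    rw [← hA, ← hB] at this
    simp only [Finset.card_univ, Fintype.card_fin] at this
    omega
  have step1 : ∑ z : Fin r → ZMod 2,
      G ((Finset.univ.filter (fun t : Fin r => (t : ℕ) < u ∧ z t = 1)).card)
        ((Finset.univ.filter (fun t : Fin r => ¬ (t : ℕ) < u ∧ z t = 1)).card)
      = ∑ p ∈ A.powerset ×ˢ B.powerset, G p.1.card p.2.card := by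
    apply Finset.sum_nbij'
      (fun z => (A.filter (fun t => z t = 1), B.filter (fun t => z t = 1)))
      (fun p => ind (p.1 ∪ p.2))
    · intro z _
      rw [Finset.mem_product]
      exact ⟨Finset.mem_powerset.mpr (Finset.filter_subset _ _),
        Finset.mem_powerset.mpr (Finset.filter_subset _ _)⟩
    · intro p _
      exact Finset.mem_univ _
    · intro z _
      have hun : A.filter (fun t => z t = 1) ∪ B.filter (fun t => z t = 1)
          = Finset.univ.filter (fun t => z t = 1) := by
        ext t
        simp only [Finset.mem_union, Finset.mem_filter, hA, hB, Finset.mem_univ, true_and]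
        tauto
      rw [hun, ← eq_ind_supp]
    · rintro ⟨T₁, T₂⟩ hp
      rw [Finset.mem_product, Finset.mem_powerset, Finset.mem_powerset] at hp
      obtain ⟨h1, h2⟩ := hp
      have e1 : A.filter (fun t => ind (T₁ ∪ T₂) t = 1) = T₁ := by
        ext t
        simp only [Finset.mem_filter, ind, Finset.mem_union]
        constructor
        · rintro ⟨htA, hval⟩
          by_cases ht : t ∈ T₁ ∨ t ∈ T₂
          · rcases ht with h | h
            · exact h
            · exfalso
              have := h2 h
              rw [hB, Finset.mem_filter] at this
              have := this.2
              rw [hA, Finset.mem_filter] at htA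
              exact this htA.2
          · rw [if_neg ht] at hval
            exact absurd hval.symm one_ne_zero
        · intro ht
          refine ⟨h1 ht, ?_⟩
          rw [if_pos (Or.inl ht)]
      have e2 : B.filter (fun t => ind (T₁ ∪ T₂) t = 1) = T₂ := by
        ext t
        simp only [Finset.mem_filter, ind, Finset.mem_union]
        constructor
        · rintro ⟨htB, hval⟩
          by_cases ht : t ∈ T₁ ∨ t ∈ T₂
          · rcases ht with h | h
            · exfalso
              have := h1 h
              rw [hA, Finset.mem_filter] at this
              rw [hB, Finset.mem_filter] at htB
              exact htB.2 this.2
            · exact h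
          · rw [if_neg ht] at hval
            exact absurd hval.symm one_ne_zero
        · intro ht
          refine ⟨h2 ht, ?_⟩
          rw [if_pos (Or.inr ht)]
      simp only [Prod.mk.injEq]
      exact ⟨e1, e2⟩
    · intro z _
      have c1 : Finset.univ.filter (fun t : Fin r => (t : ℕ) < u ∧ z t = 1)
          = A.filter (fun t => z t = 1) := by
        rw [hA, Finset.filter_filter]
      have c2 : Finset.univ.filter (fun t : Fin r => ¬ (t : ℕ) < u ∧ z t = 1)
          = B.filter (fun t => z t = 1) := by
        rw [hB, Finset.filter_filter]
      rw [c1, c2]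
  rw [step1, Finset.sum_product]
  have inner : ∀ T₁ ∈ A.powerset, ∑ T₂ ∈ B.powerset, G T₁.card T₂.card
      = ∑ j ∈ Finset.range (v+1), (Nat.choose v j : ZMod 2) * G T₁.card j := by
    intro T₁ _
    rw [sum_powerset_card B (fun c => G T₁.card c), hBcard]
  rw [Finset.sum_congr rfl inner,
    sum_powerset_card A (fun c => ∑ j ∈ Finset.range (v+1),
      (Nat.choose v j : ZMod 2) * G c j), hAcard]
  apply Finset.sum_congr rfl
  intro i _
  rw [Finset.mul_sum]

/-- the affine cube parametrization -/
def cubeMap {n r : ℕ} (u : ℕ) (σ : Fin r → Fin n) (w0 : Fin n) (e : ℕ) :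
    (Fin r → ZMod 2) → (Fin n → ZMod 2) :=
  fun z i => (if i = w0 then ((e : ZMod 2)
      + ∑ t ∈ Finset.univ.filter (fun t : Fin r => (t : ℕ) < u), z t) else 0)
    + ∑ t : Fin r, (if σ t = i then z t else 0)

lemma cubeMap_w0 {n r : ℕ} (u : ℕ) (σ : Fin r → Fin n) (w0 : Fin n) (e : ℕ)
    (hw0 : ∀ t, σ t ≠ w0) (z : Fin r → ZMod 2) :
    cubeMap u σ w0 e z w0 = (e : ZMod 2)
      + ∑ t ∈ Finset.univ.filter (fun t : Fin r => (t : ℕ) < u), z t := by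
  unfold cubeMap
  rw [if_pos rfl, Finset.sum_eq_zero (fun t _ => if_neg (hw0 t)), add_zero]

lemma cubeMap_σ {n r : ℕ} (u : ℕ) (σ : Fin r → Fin n) (w0 : Fin n) (e : ℕ)
    (hσ : Function.Injective σ) (hw0 : ∀ t, σ t ≠ w0) (z : Fin r → ZMod 2) (t0 : Fin r) :
    cubeMap u σ w0 e z (σ t0) = z t0 := by
  unfold cubeMap
  rw [if_neg (hw0 t0), Finset.sum_eq_single t0]
  · rw [if_pos rfl, zero_add]
  · intro t _ ht
    exact if_neg (fun hc => ht (hσ hc))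
  · intro h
    exact absurd (Finset.mem_univ t0) h

lemma cubeMap_other {n r : ℕ} (u : ℕ) (σ : Fin r → Fin n) (w0 : Fin n) (e : ℕ)
    (z : Fin r → ZMod 2) (i : Fin n) (hiw : i ≠ w0) (hiσ : ∀ t, σ t ≠ i) :
    cubeMap u σ w0 e z i = 0 := by
  unfold cubeMap
  rw [if_neg hiw, Finset.sum_eq_zero (fun t _ => if_neg (hiσ t)), add_zero]

lemma cube_sum {n r u v : ℕ} (huv : u + v = r) (F : ℕ → ZMod 2) (f : BF n)
    (hF : ∀ x, f x = F ((Finset.univ.filter (fun i => x i = 1)).card))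
    (σ : Fin r → Fin n) (hσ : Function.Injective σ) (w0 : Fin n)
    (hw0 : ∀ t, σ t ≠ w0) (e : ℕ) :
    ∑ z : Fin r → ZMod 2, f (cubeMap u σ w0 e z) = SS F e u v := by
  classical
  have key : ∀ z : Fin r → ZMod 2,
      f (cubeMap u σ w0 e z)
      = F (((Finset.univ.filter (fun t : Fin r => (t : ℕ) < u ∧ z t = 1)).card)
          + (((Finset.univ.filter (fun t : Fin r => (t : ℕ) < u ∧ z t = 1)).card + e) % 2)
          + ((Finset.univ.filter (fun t : Fin r => ¬ (t : ℕ) < u ∧ z t = 1)).card)) := by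
    intro z
    set i₁ := (Finset.univ.filter (fun t : Fin r => (t : ℕ) < u ∧ z t = 1)).card with hi₁
    set j₁ := (Finset.univ.filter (fun t : Fin r => ¬ (t : ℕ) < u ∧ z t = 1)).card with hj₁
    rw [hF]
    set bit : ZMod 2 := (e : ZMod 2)
      + ∑ t ∈ Finset.univ.filter (fun t : Fin r => (t : ℕ) < u), z t with hbit
    have hbit2 : bit = (((i₁ + e) % 2 : ℕ) : ZMod 2) := by
      rw [hbit, sum_zmod_eq_card, Finset.filter_filter, ← natCast_zmod2]
      push_cast
      rw [← hi₁]
      ring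
    have hsupp : Finset.univ.filter (fun i => cubeMap u σ w0 e z i = 1)
        = ((Finset.univ.filter (fun t => z t = 1)).image σ)
          ∪ (if bit = 1 then {w0} else ∅) := by
      ext i
      by_cases hiw : i = w0
      · subst hiw
        simp only [Finset.mem_filter, Finset.mem_univ, true_and, Finset.mem_union,
          Finset.mem_image]
        rw [cubeMap_w0 u σ i e hw0 z, ← hbit]
        constructor
        · intro h
          right
          rw [if_pos h]
          exact Finset.mem_singleton_self i
        · rintro (⟨t, _, hti⟩ | h)
          · exact absurd hti (hw0 t)
          · by_cases hb : bit = 1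
            · exact hb
            · rw [if_neg hb] at h
              exact absurd h (Finset.notMem_empty i)
      · by_cases hiσ : ∃ t, σ t = i
        · obtain ⟨t0, rfl⟩ := hiσ
          simp only [Finset.mem_filter, Finset.mem_univ, true_and, Finset.mem_union,
            Finset.mem_image]
          rw [cubeMap_σ u σ w0 e hσ hw0 z t0]
          constructor
          · intro h
            exact Or.inl ⟨t0, by simp [h]⟩
          · rintro (⟨t, ht, hti⟩ | h)
            · rw [← hσ hti]
              exact ht
            · exfalso
              by_cases hb : bit = 1
              · rw [if_pos hb] at h
                exact hiw (Finset.mem_singleton.mp h)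
              · rw [if_neg hb] at h
                exact Finset.notMem_empty _ h
        · push_neg at hiσ
          simp only [Finset.mem_filter, Finset.mem_univ, true_and, Finset.mem_union,
            Finset.mem_image]
          rw [cubeMap_other u σ w0 e z i hiw hiσ]
          constructor
          · intro h
            exact absurd h.symm one_ne_zero
          · rintro (⟨t, _, hti⟩ | h)
            · exact absurd hti (hiσ t)
            · exfalso
              by_cases hb : bit = 1
              · rw [if_pos hb] at h
                exact hiw (Finset.mem_singleton.mp h)
              · rw [if_neg hb] at h
                exact Finset.notMem_empty _ h
    rw [hsupp]
    have hdisj : Disjoint ((Finset.univ.filter (fun t => z t = 1)).image σ)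
        (if bit = 1 then ({w0} : Finset (Fin n)) else ∅) := by
      rw [Finset.disjoint_left]
      intro x hx1 hx2
      have hxw : x = w0 := by
        by_cases hb : bit = 1
        · rw [if_pos hb] at hx2
          exact Finset.mem_singleton.mp hx2
        · rw [if_neg hb] at hx2
          exact absurd hx2 (Finset.notMem_empty x)
      subst hxw
      obtain ⟨t, _, hti⟩ := Finset.mem_image.mp hx1
      exact hw0 t hti
    rw [Finset.card_union_of_disjoint hdisj,
      Finset.card_image_of_injective _ hσ]
    have hcsplit : (Finset.univ.filter (fun t : Fin r => z t = 1)).card = i₁ + j₁ := by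
      have := Finset.card_filter_add_card_filter_not
        (s := Finset.univ.filter (fun t : Fin r => z t = 1))
        (p := fun t : Fin r => (t : ℕ) < u)
      rw [Finset.filter_filter, Finset.filter_filter] at this
      have e1 : Finset.univ.filter (fun t : Fin r => z t = 1 ∧ (t : ℕ) < u)
          = Finset.univ.filter (fun t : Fin r => (t : ℕ) < u ∧ z t = 1) := by
        apply Finset.filter_congr
        intro t _
        tauto
      have e2 : Finset.univ.filter (fun t : Fin r => z t = 1 ∧ ¬ (t : ℕ) < u)
          = Finset.univ.filter (fun t : Fin r => ¬ (t : ℕ) < u ∧ z t = 1) := by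
        apply Finset.filter_congr
        intro t _
        tauto
      rw [e1, e2] at this
      omega
    have hbitcard : (if bit = 1 then ({w0} : Finset (Fin n)) else ∅).card = (i₁ + e) % 2 := by
      rcases Nat.mod_two_eq_zero_or_one (i₁ + e) with h | h
      · have hb : bit ≠ 1 := by
          rw [hbit2, h]
          simp
        rw [if_neg hb, Finset.card_empty, h]
      · have hb : bit = 1 := by
          rw [hbit2, h]
          simp
        rw [if_pos hb, Finset.card_singleton, h]
    rw [hcsplit, hbitcard]
    congr 1
    omega
  rw [Finset.sum_congr rfl (fun z _ => key z)]
  rw [count_pairs huv (fun i j => F (i + (i + e) % 2 + j))]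
  rw [SS_eq_double]

end S15aux

namespace S15aux

open Finset

lemma cubeMap_affine {n r : ℕ} (u : ℕ) (σ : Fin r → Fin n) (w0 : Fin n) (e : ℕ) :
    IsAffineMap (cubeMap u σ w0 e) := by
  classical
  refine ⟨LinearMap.pi (fun i => (if i = w0 then
      (∑ t ∈ Finset.univ.filter (fun t : Fin r => (t : ℕ) < u),
        (LinearMap.proj t : (Fin r → ZMod 2) →ₗ[ZMod 2] ZMod 2)) else 0)
      + ∑ t : Fin r, (if σ t = i then
        (LinearMap.proj t : (Fin r → ZMod 2) →ₗ[ZMod 2] ZMod 2) else 0)),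
    (fun i => if i = w0 then (e : ZMod 2) else 0), ?_⟩
  funext z
  funext i
  simp only [Pi.add_apply, LinearMap.pi_apply, LinearMap.add_apply, LinearMap.sum_apply]
  unfold cubeMap
  by_cases hi : i = w0
  · rw [if_pos hi, if_pos hi, if_pos hi]
    simp only [LinearMap.sum_apply, LinearMap.coe_proj, Function.eval]
    have h1 : ∀ t : Fin r, (if σ t = i then
          (LinearMap.proj t : (Fin r → ZMod 2) →ₗ[ZMod 2] ZMod 2) else 0) z
        = (if σ t = i then z t else 0) := by
      intro t
      by_cases h : σ t = i <;> simp [h]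
    rw [Finset.sum_congr rfl (fun t _ => h1 t)]
    ring
  · rw [if_neg hi, if_neg hi, if_neg hi]
    simp only [LinearMap.zero_apply]
    have h1 : ∀ t : Fin r, (if σ t = i then
          (LinearMap.proj t : (Fin r → ZMod 2) →ₗ[ZMod 2] ZMod 2) else 0) z
        = (if σ t = i then z t else 0) := by
      intro t
      by_cases h : σ t = i <;> simp [h]
    rw [Finset.sum_congr rfl (fun t _ => h1 t)]
    ring

lemma exists_affine_factor {k m n : ℕ} (φ : (Fin m → ZMod 2) → (Fin n → ZMod 2))
    (hφ : IsAffineMap φ) (hinj : Function.Injective φ)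
    (ψ : (Fin k → ZMod 2) → (Fin n → ZMod 2)) (hψ : IsAffineMap ψ)
    (hsub : ∀ z, ψ z ∈ Set.range φ) :
    ∃ e : (Fin k → ZMod 2) → (Fin m → ZMod 2), IsAffineMap e ∧ ∀ z, φ (e z) = ψ z := by
  obtain ⟨Lφ, bφ, hφeq⟩ := hφ
  obtain ⟨Lψ, bψ, hψeq⟩ := hψ
  have hLinj : Function.Injective Lφ := by
    intro x y hxy
    apply hinj
    rw [hφeq]
    simp only [hxy]
  obtain ⟨g, hg⟩ := LinearMap.exists_leftInverse_of_injective Lφ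
    (LinearMap.ker_eq_bot.mpr hLinj)
  have hgL : ∀ y, g (Lφ y) = y := fun y => LinearMap.ext_iff.mp hg y
  refine ⟨fun z => g (ψ z + bφ), ⟨g.comp Lψ, g (bψ + bφ), ?_⟩, ?_⟩
  · funext z
    rw [hψeq]
    simp only [LinearMap.comp_apply, ← map_add]
    congr 1
    abel
  · intro z
    obtain ⟨y, hy⟩ := hsub z
    have hy' : ψ z = Lφ y + bφ := by rw [← hy, hφeq]
    show φ (g (ψ z + bφ)) = ψ z
    rw [hy', hφeq]
    simp only []
    rw [add_assoc, pi_add_self, add_zero, hgL]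

lemma choose_uv (n r w : ℕ) (h1 : 1 ≤ w) (h2 : w ≤ n) (h3 : 2 ≤ r) (h4 : r + 2 ≤ n)
    (h5 : r % 2 = 0 ∨ w < n) :
    ∃ u v, u % 2 = 0 ∧ u + v = r ∧ u + 1 ≤ w ∧ v ≤ n - w := by
  by_cases hc : r + w ≤ n
  · exact ⟨0, r, by omega, by omega, by omega, by omega⟩
  · exact ⟨(r + w - n) + (r + w - n) % 2, r - ((r + w - n) + (r + w - n) % 2),
      by omega, by omega, by omega, by omega⟩

lemma dot_cubeMap {n r : ℕ} (u : ℕ) (σ : Fin r → Fin n) (w0 : Fin n) (e : ℕ)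
    (a : Fin n → ZMod 2) (haw0 : a w0 = 1)
    (hlegs : ∀ t : Fin r, (t : ℕ) < u → a (σ t) = 1)
    (hout : ∀ t : Fin r, ¬ (t : ℕ) < u → a (σ t) = 0)
    (z : Fin r → ZMod 2) :
    ∑ i, a i * cubeMap u σ w0 e z i = (e : ZMod 2) := by
  classical
  unfold cubeMap
  have hsplit : ∀ i : Fin n, a i * ((if i = w0 then ((e : ZMod 2)
      + ∑ t ∈ Finset.univ.filter (fun t : Fin r => (t : ℕ) < u), z t) else 0)
      + ∑ t : Fin r, (if σ t = i then z t else 0))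
      = (if i = w0 then a i * ((e : ZMod 2)
        + ∑ t ∈ Finset.univ.filter (fun t : Fin r => (t : ℕ) < u), z t) else 0)
        + ∑ t : Fin r, (if σ t = i then a i * z t else 0) := by
    intro i
    rw [mul_add, mul_ite, mul_zero, Finset.mul_sum]
    congr 1
    apply Finset.sum_congr rfl
    intro t _
    rw [mul_ite, mul_zero]
  rw [Finset.sum_congr rfl (fun i _ => hsplit i), Finset.sum_add_distrib]
  have h1 : ∑ i : Fin n, (if i = w0 then a i * ((e : ZMod 2)
      + ∑ t ∈ Finset.univ.filter (fun t : Fin r => (t : ℕ) < u), z t) else 0)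
      = (e : ZMod 2) + ∑ t ∈ Finset.univ.filter (fun t : Fin r => (t : ℕ) < u), z t := by
    rw [Finset.sum_ite_eq' Finset.univ w0]
    rw [if_pos (Finset.mem_univ w0), haw0, one_mul]
  have h2 : ∑ i : Fin n, ∑ t : Fin r, (if σ t = i then a i * z t else 0)
      = ∑ t ∈ Finset.univ.filter (fun t : Fin r => (t : ℕ) < u), z t := by
    rw [Finset.sum_comm]
    have hinner : ∀ t : Fin r, ∑ i : Fin n, (if σ t = i then a i * z t else 0)
        = a (σ t) * z t := by
      intro t
      rw [Finset.sum_ite_eq Finset.univ (σ t) (fun i => a i * z t)]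
      rw [if_pos (Finset.mem_univ _)]
    rw [Finset.sum_congr rfl (fun t _ => hinner t)]
    rw [← Finset.sum_filter_add_sum_filter_not Finset.univ (fun t : Fin r => (t : ℕ) < u)]
    have hA : ∑ t ∈ Finset.univ.filter (fun t : Fin r => (t : ℕ) < u), a (σ t) * z t
        = ∑ t ∈ Finset.univ.filter (fun t : Fin r => (t : ℕ) < u), z t := by
      apply Finset.sum_congr rfl
      intro t ht
      rw [hlegs t (Finset.mem_filter.mp ht).2, one_mul]
    have hB : ∑ t ∈ Finset.univ.filter (fun t : Fin r => ¬ (t : ℕ) < u), a (σ t) * z t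
        = 0 := by
      apply Finset.sum_eq_zero
      intro t ht
      rw [hout t (Finset.mem_filter.mp ht).2, zero_mul]
    rw [hA, hB, add_zero]
  rw [h1, h2]
  rw [add_assoc, zmod2_add_self, add_zero]

end S15aux

namespace S15aux

open Finset

lemma zmod2_ne_iff (p q : ZMod 2) : (¬ p = q) ↔ p = q + 1 := by revert p q; decide

lemma nodrop_main {n r : ℕ} (hr2 : 2 ≤ r) (hrn : r + 2 ≤ n) (f : BF n)
    (hsym : ∀ π : Equiv.Perm (Fin n), ∀ x : Fin n → ZMod 2, f (x ∘ π) = f x)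
    (hdeg : degB f = (r : WithBot ℕ))
    (a : Fin n → ZMod 2) (εZ : ZMod 2) (ha : a ≠ 0)
    (hcase : r % 2 = 0 ∨ (Finset.univ.filter (fun i => a i = 1)).card < n)
    (φ : (Fin (n-1) → ZMod 2) → (Fin n → ZMod 2)) (hφaff : IsAffineMap φ)
    (hφinj : Function.Injective φ)
    (hrange : Set.range φ = {x | ∑ i, a i * x i = εZ}) :
    ¬ degB (f ∘ φ) < degB f := by
  classical
  intro hdrop
  set W := Finset.univ.filter (fun i => a i = 1) with hW
  have hWne : W.Nonempty := by
    obtain ⟨i, hi⟩ := Function.ne_iff.mp ha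
    have hi1 : a i = 1 := by
      rcases zmod2_cases (a i) with h | h
      · exact absurd (by simpa using h) hi
      · exact h
    exact ⟨i, by simp [hW, hi1]⟩
  have hw1 : 1 ≤ W.card := Finset.card_pos.mpr hWne
  have hwn : W.card ≤ n := by simpa using Finset.card_le_univ W
  obtain ⟨u, v, hu2, huv, huw, hvnw⟩ := choose_uv n r W.card hw1 hwn hr2 hrn hcase
  obtain ⟨w0, hw0W⟩ := hWne
  have hLucard : u ≤ (W.erase w0).card := by
    rw [Finset.card_erase_of_mem hw0W]; omega
  obtain ⟨Lu, hLusub, hLucard'⟩ := Finset.exists_subset_card_eq hLucard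
  have hVcard : v ≤ Wᶜ.card := by
    rw [Finset.card_compl]
    simp only [Fintype.card_fin]
    omega
  obtain ⟨V, hVsub, hVcard'⟩ := Finset.exists_subset_card_eq hVcard
  have hvlt : ∀ t : Fin r, ¬ (t : ℕ) < u → (t : ℕ) - u < v := by
    intro t ht
    have := t.2
    omega
  set eLu := Lu.orderIsoOfFin hLucard' with heLu
  set eV := V.orderIsoOfFin hVcard' with heV
  set σ : Fin r → Fin n := fun t =>
    if h : (t : ℕ) < u then (eLu ⟨t, h⟩).1 else (eV ⟨(t : ℕ) - u, hvlt t h⟩).1 with hσdef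
  have hσLu : ∀ t : Fin r, (h : (t : ℕ) < u) → σ t ∈ Lu := by
    intro t h
    rw [hσdef]
    simp only [dif_pos h]
    exact (eLu ⟨t, h⟩).2
  have hσV : ∀ t : Fin r, (h : ¬ (t : ℕ) < u) → σ t ∈ V := by
    intro t h
    rw [hσdef]
    simp only [dif_neg h]
    exact (eV ⟨(t : ℕ) - u, hvlt t h⟩).2
  have hσW : ∀ t : Fin r, (t : ℕ) < u → σ t ∈ W :=
    fun t h => Finset.mem_of_mem_erase (hLusub (hσLu t h))
  have hσnW : ∀ t : Fin r, ¬ (t : ℕ) < u → σ t ∉ W :=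
    fun t h => Finset.mem_compl.mp (hVsub (hσV t h))
  have hw0ne : ∀ t : Fin r, σ t ≠ w0 := by
    intro t
    by_cases h : (t : ℕ) < u
    · exact Finset.ne_of_mem_erase (hLusub (hσLu t h))
    · intro hc
      exact hσnW t h (hc ▸ hw0W)
  have hσinj : Function.Injective σ := by
    intro t t' heq
    by_cases h : (t : ℕ) < u <;> by_cases h' : (t' : ℕ) < u
    · rw [hσdef] at heq
      simp only [dif_pos h, dif_pos h'] at heq
      have := eLu.injective (Subtype.val_injective heq)
      have := Fin.mk.injEq .. ▸ this
      exact Fin.ext (by exact_mod_cast this)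
    · exact absurd (heq ▸ hσW t h) (hσnW t' h')
    · exact absurd (heq.symm ▸ hσW t' h') (hσnW t h)
    · rw [hσdef] at heq
      simp only [dif_neg h, dif_neg h'] at heq
      have := eV.injective (Subtype.val_injective heq)
      have h2 := Fin.mk.injEq .. ▸ this
      have h3 : (t : ℕ) - u = (t' : ℕ) - u := by exact_mod_cast h2
      have := t.2
      have := t'.2
      exact Fin.ext (by omega)
  have haw0 : a w0 = 1 := by
    rw [hW] at hw0W
    exact (Finset.mem_filter.mp hw0W).2
  have hlegs : ∀ t : Fin r, (t : ℕ) < u → a (σ t) = 1 := by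
    intro t h
    have := hσW t h
    rw [hW] at this
    exact (Finset.mem_filter.mp this).2
  have hout : ∀ t : Fin r, ¬ (t : ℕ) < u → a (σ t) = 0 := by
    intro t h
    have hnW := hσnW t h
    rcases zmod2_cases (a (σ t)) with h0 | h1
    · exact h0
    · exact absurd (by simp [hW, h1]) hnW
  set e' : ℕ := if εZ = 1 then 1 else 0 with he'def
  have he'cast : (e' : ZMod 2) = εZ := by
    rcases zmod2_cases εZ with h | h <;> simp [he'def, h]
  have he'le : e' ≤ 1 := by
    rw [he'def]
    split <;> omega
  set ψ := cubeMap u σ w0 e' with hψdef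
  have hsub : ∀ z, ψ z ∈ Set.range φ := by
    intro z
    rw [hrange]
    show ∑ i, a i * ψ z i = εZ
    rw [hψdef]
    rw [dot_cubeMap u σ w0 e' a haw0 hlegs hout z, he'cast]
  obtain ⟨E, hEaff, hEcomp⟩ := exists_affine_factor φ hφaff hφinj ψ
    (cubeMap_affine u σ w0 e') hsub
  obtain ⟨LE, bE, hEeq⟩ := hEaff
  have hdegle : degB (f ∘ φ) ≤ ((r - 1 : ℕ) : WithBot ℕ) :=
    withbot_lt_coe (by omega) (hdeg ▸ hdrop)
  have hzero : ∑ z : Fin r → ZMod 2, (f ∘ φ) (LE z + bE) = 0 :=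
    sum_comp_affine (f ∘ φ) hdegle (by omega) LE bE
  have hsum : ∑ z : Fin r → ZMod 2, (f ∘ φ) (LE z + bE) = SS (Fw f) e' u v := by
    have hterm : ∀ z, (f ∘ φ) (LE z + bE) = f (ψ z) := by
      intro z
      have h1 : LE z + bE = E z := by rw [hEeq]
      rw [h1]
      show f (φ (E z)) = f (ψ z)
      rw [hEcomp z]
    rw [Finset.sum_congr rfl (fun z _ => hterm z)]
    exact cube_sum huv (Fw f) f (fun x => f_eq_Fw f hsym x) σ hσinj w0 hw0ne e'
  have hSSval : SS (Fw f) e' u v ≠ 0 := by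
    obtain ⟨c, hc⟩ : ∃ c, u = 2 * c := ⟨u / 2, by omega⟩
    rw [hc] at huv
    rw [hc, SS_even (Fw f) e' c v he'le, huv]
    by_cases hε : εZ = 1
    · have he1 : e' = 1 := by rw [he'def, if_pos hε]
      rw [he1]
      have hP := DD_pascal (Fw f) r 0
      have hhigh : DD (Fw f) (r + 1) 0 = 0 :=
        c_high_zero f hsym hdeg (r + 1) (by omega) (by omega)
      have hr0 : DD (Fw f) r 0 ≠ 0 := c_r_ne_zero f hsym hdeg
      intro hc1
      rw [hhigh] at hP
      rw [show (0 : ℕ) + 1 = 1 from rfl] at hP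
      rw [hc1, add_zero] at hP
      exact hr0 hP.symm
    · have he0 : e' = 0 := by rw [he'def, if_neg hε]
      rw [he0]
      exact c_r_ne_zero f hsym hdeg
  rw [hsum] at hzero
  exact hSSval hzero

lemma range_eq_hyperplane {n : ℕ} (hn : 1 ≤ n)
    (φ : (Fin (n-1) → ZMod 2) → (Fin n → ZMod 2)) (hφaff : IsAffineMap φ)
    (hφinj : Function.Injective φ) :
    ∃ (a : Fin n → ZMod 2) (εZ : ZMod 2), a ≠ 0
      ∧ Set.range φ = {x | ∑ i, a i * x i = εZ} := by
  classical
  obtain ⟨L, b, hφeq⟩ := hφaff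
  have hne : LinearMap.range L ≠ ⊤ := by
    intro htop
    have h1 := LinearMap.finrank_range_le L
    rw [htop, finrank_top, Module.finrank_fintype_fun_eq_card,
      Module.finrank_fintype_fun_eq_card, Fintype.card_fin, Fintype.card_fin] at h1
    omega
  obtain ⟨μ, hμ0, hμmap⟩ := Submodule.exists_dual_map_eq_bot_of_lt_top
    (lt_top_iff_ne_top.mpr hne) inferInstance
  have hker : ∀ y, μ (L y) = 0 := by
    intro y
    have h1 : μ (L y) ∈ (LinearMap.range L).map μ :=
      Submodule.mem_map_of_mem ⟨y, rfl⟩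
    rw [hμmap] at h1
    exact (Submodule.mem_bot _).mp h1
  set a : Fin n → ZMod 2 := fun i => μ (fun j => if i = j then 1 else 0) with hadef
  have hdot : ∀ x, μ x = ∑ i, a i * x i := by
    intro x
    rw [LinearMap.pi_apply_eq_sum_univ μ x]
    apply Finset.sum_congr rfl
    intro i _
    rw [smul_eq_mul, mul_comm]
  have hane : a ≠ 0 := by
    intro h0
    apply hμ0
    apply LinearMap.ext
    intro x
    rw [hdot x]
    have hzero : ∀ i, a i = 0 := fun i => by rw [h0]; rfl
    simp [hzero]
  refine ⟨a, μ b, hane, ?_⟩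
  have hμφ : ∀ z, μ (φ z) = μ b := by
    intro z
    rw [hφeq]
    simp only []
    rw [map_add, hker, zero_add]
  set S1 := Finset.univ.filter (fun x : Fin n → ZMod 2 => μ x = μ b) with hS1
  set IM := Finset.image φ Finset.univ with hIM
  have hsub : IM ⊆ S1 := by
    intro x hx
    obtain ⟨z, _, rfl⟩ := Finset.mem_image.mp hx
    simp [hS1, hμφ z]
  have hcardIM : IM.card = 2 ^ (n - 1) := by
    rw [hIM, Finset.card_image_of_injective _ hφinj, Finset.card_univ, Fintype.card_fun]
    simp
  obtain ⟨i0, hi0⟩ : ∃ i0, a i0 = 1 := by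
    obtain ⟨i, hi⟩ := Function.ne_iff.mp hane
    rcases zmod2_cases (a i) with h | h
    · exact absurd (by simpa using h) hi
    · exact ⟨i, h⟩
  set x1 : Fin n → ZMod 2 := fun j => if i0 = j then 1 else 0 with hx1def
  have hμx1 : μ x1 = 1 := hi0
  set S2 := Finset.univ.filter (fun x : Fin n → ZMod 2 => μ x = μ b + 1) with hS2
  have hbij : S1.card = S2.card := by
    apply Finset.card_nbij' (fun x => x + x1) (fun x => x + x1)
    · intro x hx
      simp only [Finset.mem_coe] at hx ⊢
      rw [hS1, Finset.mem_filter] at hx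
      rw [hS2, Finset.mem_filter]
      exact ⟨Finset.mem_univ _, by rw [map_add, hx.2, hμx1]⟩
    · intro x hx
      simp only [Finset.mem_coe] at hx ⊢
      rw [hS2, Finset.mem_filter] at hx
      rw [hS1, Finset.mem_filter]
      refine ⟨Finset.mem_univ _, ?_⟩
      rw [map_add, hx.2, hμx1, add_assoc]
      rw [zmod2_add_self, add_zero]
    · intro x _
      beta_reduce
      rw [add_assoc, pi_add_self, add_zero]
    · intro x _
      beta_reduce
      rw [add_assoc, pi_add_self, add_zero]
  have hpart : S1.card + S2.card = 2 ^ n := by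
    have hp := Finset.card_filter_add_card_filter_not
      (s := (Finset.univ : Finset (Fin n → ZMod 2)))
      (p := fun x => μ x = μ b)
    have hS2' : Finset.univ.filter (fun x : Fin n → ZMod 2 => ¬ μ x = μ b) = S2 := by
      rw [hS2]
      apply Finset.filter_congr
      intro x _
      rw [zmod2_ne_iff]
    rw [hS2'] at hp
    rw [← hS1] at hp
    rw [hp, Finset.card_univ, Fintype.card_fun]
    simp
  have h2n : 2 ^ n = 2 * 2 ^ (n - 1) := by
    conv_lhs => rw [show n = n - 1 + 1 by omega]
    rw [pow_succ]
    ring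
  have hcardS1 : S1.card = 2 ^ (n - 1) := by omega
  have hEQ : IM = S1 := Finset.eq_of_subset_of_card_le hsub (by omega)
  ext x
  constructor
  · rintro ⟨z, rfl⟩
    show ∑ i, a i * φ z i = μ b
    rw [← hdot]
    exact hμφ z
  · intro hx
    have hx' : μ x = μ b := by
      rw [hdot]
      exact hx
    have : x ∈ S1 := by
      rw [hS1, Finset.mem_filter]
      exact ⟨Finset.mem_univ _, hx'⟩
    rw [← hEQ] at this
    obtain ⟨z, _, hz⟩ := Finset.mem_image.mp this
    exact ⟨z, hz⟩

end S15aux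

namespace S15aux

open Finset

lemma zmod2_eq_of_add (p q : ZMod 2) (h : p + q = 0) : p = q := by revert p q; decide

lemma filter_lt_eq_image {n j : ℕ} (hj : j ≤ n) :
    Finset.univ.filter (fun i : Fin n => (i : ℕ) < j)
      = Finset.image (fun t : Fin j => Fin.castLE hj t) Finset.univ := by
  ext i
  simp only [mem_filter, mem_univ, true_and, Finset.mem_image]
  constructor
  · intro hi; exact ⟨⟨(i : ℕ), hi⟩, by simp [Fin.castLE, Fin.ext_iff]⟩
  · rintro ⟨t, rfl⟩; exact t.2

lemma drop_allones {n r : ℕ} (hr2 : 2 ≤ r) (hrn : r + 2 ≤ n) (f : BF n)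
    (hsym : ∀ π : Equiv.Perm (Fin n), ∀ x : Fin n → ZMod 2, f (x ∘ π) = f x)
    (hdeg : degB f = (r : WithBot ℕ)) (hodd : r % 2 = 1) :
    DegreeDropSet f 1 {x : Fin n → ZMod 2 | ∑ i, x i = 0} := by
  classical
  have hle : n - 1 ≤ n := by omega
  set L : (Fin (n-1) → ZMod 2) →ₗ[ZMod 2] (Fin n → ZMod 2) :=
    LinearMap.pi (fun i : Fin n => if h : (i : ℕ) < n - 1 then
      (LinearMap.proj (⟨(i : ℕ), h⟩ : Fin (n-1)) : (Fin (n-1) → ZMod 2) →ₗ[ZMod 2] ZMod 2)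
      else ∑ t : Fin (n-1), LinearMap.proj t) with hL
  have hLev : ∀ (z : Fin (n-1) → ZMod 2) (i : Fin n),
      L z i = if h : (i : ℕ) < n - 1 then z ⟨(i : ℕ), h⟩ else ∑ t, z t := by
    intro z i
    rw [hL, LinearMap.pi_apply]
    by_cases h : (i : ℕ) < n - 1
    · rw [dif_pos h, dif_pos h]
      rfl
    · rw [dif_neg h, dif_neg h]
      rw [LinearMap.sum_apply]
      rfl
  have hlast : ∀ i : Fin n, ¬ (i : ℕ) < n - 1 → (i : ℕ) = n - 1 := by
    intro i hi
    have := i.2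
    omega
  have hLcast : ∀ (z : Fin (n-1) → ZMod 2) (t : Fin (n-1)), L z (Fin.castLE hle t) = z t := by
    intro z t
    rw [hLev]
    have h : ((Fin.castLE hle t : Fin n) : ℕ) < n - 1 := t.2
    rw [dif_pos h]
    exact congrArg z (Fin.ext rfl)
  have hsum_img : ∀ (x : Fin n → ZMod 2),
      ∑ i ∈ Finset.univ.filter (fun i : Fin n => (i : ℕ) < n - 1), x i
        = ∑ t : Fin (n-1), x (Fin.castLE hle t) := by
    intro x
    rw [filter_lt_eq_image hle, Finset.sum_image
      (fun t _ t' _ h => Fin.castLE_injective hle h)]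
  have hfilter_not : Finset.univ.filter (fun i : Fin n => ¬ (i : ℕ) < n - 1)
      = {(⟨n - 1, by omega⟩ : Fin n)} := by
    ext i
    simp only [mem_filter, mem_univ, true_and, Finset.mem_singleton]
    constructor
    · intro h
      exact Fin.ext (hlast i h)
    · rintro rfl
      simp
  have hLsum : ∀ z : Fin (n-1) → ZMod 2, ∑ i, L z i = 0 := by
    intro z
    rw [← Finset.sum_filter_add_sum_filter_not Finset.univ
      (fun i : Fin n => (i : ℕ) < n - 1) (fun i => L z i)]
    rw [hsum_img (fun i => L z i)]
    rw [Finset.sum_congr rfl (fun t (_ : t ∈ Finset.univ) => hLcast z t)]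
    rw [hfilter_not, Finset.sum_singleton]
    rw [hLev]
    rw [dif_neg (by simp)]
    exact zmod2_add_self _
  have hLinj : Function.Injective L := by
    intro y y' h
    funext t
    have h2 := congrFun h (Fin.castLE hle t)
    rwa [hLcast, hLcast] at h2
  refine ⟨⇑L, ⟨L, 0, by funext z; rw [add_zero]⟩, hLinj, ?_, ?_⟩
  · ext x
    constructor
    · rintro ⟨z, rfl⟩
      exact hLsum z
    · intro hx
      have hx' : ∑ i, x i = 0 := hx
      refine ⟨fun t => x (Fin.castLE hle t), ?_⟩
      funext i
      rw [hLev]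
      by_cases h : (i : ℕ) < n - 1
      · rw [dif_pos h]
        congr 1
      · rw [dif_neg h]
        have hi : i = (⟨n - 1, by omega⟩ : Fin n) := Fin.ext (hlast i h)
        rw [← Finset.sum_filter_add_sum_filter_not Finset.univ
          (fun i : Fin n => (i : ℕ) < n - 1) (fun i => x i)] at hx'
        rw [hsum_img x, hfilter_not, Finset.sum_singleton] at hx'
        rw [hi]
        exact zmod2_eq_of_add _ _ hx'
  · rw [hdeg]
    have hbound : degB (f ∘ ⇑L) ≤ ((r - 1 : ℕ) : WithBot ℕ) := by
      rw [degB_le_iff]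
      intro S hanf
      by_contra hcard
      push_neg at hcard
      have hm1 : r ≤ S.card := by omega
      have hm2 : S.card ≤ n - 1 := by
        have := Finset.card_le_univ S
        simpa using this
      apply hanf
      -- compute anf (f ∘ L) S
      have hval : ∀ T ∈ S.powerset, (f ∘ ⇑L) (ind T) = Fw f (T.card + T.card % 2) := by
        intro T _
        show f (L (ind T)) = _
        rw [f_eq_Fw f hsym]
        congr 1
        -- support cardinality
        have hbitval : L (ind T) (⟨n - 1, by omega⟩ : Fin n) = ((T.card % 2 : ℕ) : ZMod 2) := by
          rw [hLev, dif_neg (by simp)]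
          rw [sum_zmod_eq_card Finset.univ (ind T), ind_filter, ← natCast_zmod2]
        have hsupp : Finset.univ.filter (fun i : Fin n => L (ind T) i = 1)
            = (Finset.image (fun t : Fin (n-1) => Fin.castLE hle t) T)
              ∪ (if T.card % 2 = 1 then {(⟨n - 1, by omega⟩ : Fin n)} else ∅) := by
          ext i
          simp only [mem_filter, mem_univ, true_and, Finset.mem_union, Finset.mem_image]
          by_cases h : (i : ℕ) < n - 1
          · rw [hLev, dif_pos h]
            constructor
            · intro hv
              left
              refine ⟨⟨(i : ℕ), h⟩, ?_, by simp [Fin.castLE, Fin.ext_iff]⟩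
              unfold ind at hv
              by_cases hmem : (⟨(i : ℕ), h⟩ : Fin (n-1)) ∈ T
              · exact hmem
              · rw [if_neg hmem] at hv
                exact absurd hv.symm one_ne_zero
            · rintro (⟨t, htT, rfl⟩ | hbad)
              · have : (⟨((Fin.castLE hle t : Fin n) : ℕ), h⟩ : Fin (n-1)) = t := by
                  apply Fin.ext
                  rfl
                rw [this]
                unfold ind
                rw [if_pos htT]
              · exfalso
                by_cases hb : T.card % 2 = 1
                · rw [if_pos hb, Finset.mem_singleton] at hbad
                  rw [hbad] at h
                  simp at h
                · rw [if_neg hb] at hbad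
                  exact Finset.notMem_empty _ hbad
          · have hi : i = (⟨n - 1, by omega⟩ : Fin n) := Fin.ext (hlast i h)
            rw [hi, hbitval]
            constructor
            · intro hv
              right
              rcases Nat.mod_two_eq_zero_or_one T.card with h0 | h1
              · rw [h0] at hv
                exact absurd hv (by simp)
              · rw [if_pos h1]
                exact Finset.mem_singleton_self _
            · rintro (⟨t, _, hteq⟩ | hgood)
              · exfalso
                have := congrArg (fun i : Fin n => (i : ℕ)) hteq
                have ht2 := t.2
                simp [Fin.castLE] at this
                omega
              · rcases Nat.mod_two_eq_zero_or_one T.card with h0 | h1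
                · rw [if_neg (by omega)] at hgood
                  exact absurd hgood (Finset.notMem_empty _)
                · rw [h1]
                  simp
        rw [hsupp]
        have hdisj : Disjoint (Finset.image (fun t : Fin (n-1) => Fin.castLE hle t) T)
            (if T.card % 2 = 1 then ({(⟨n - 1, by omega⟩ : Fin n)} : Finset (Fin n)) else ∅) := by
          rw [Finset.disjoint_left]
          intro x hx1 hx2
          obtain ⟨t, _, rfl⟩ := Finset.mem_image.mp hx1
          by_cases hb : T.card % 2 = 1
          · rw [if_pos hb, Finset.mem_singleton] at hx2
            have := congrArg (fun i : Fin n => (i : ℕ)) hx2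
            have ht2 := t.2
            simp [Fin.castLE] at this
            omega
          · rw [if_neg hb] at hx2
            exact Finset.notMem_empty _ hx2
        rw [Finset.card_union_of_disjoint hdisj,
          Finset.card_image_of_injective _ (Fin.castLE_injective hle)]
        congr 1
        rcases Nat.mod_two_eq_zero_or_one T.card with h0 | h1
        · rw [h0, if_neg (by omega), Finset.card_empty]
        · rw [h1, if_pos rfl, Finset.card_singleton]
      have hanf2 : anf (f ∘ ⇑L) S = SS (Fw f) 0 S.card 0 := by
        rw [anf_eq, Finset.sum_congr rfl hval,
          sum_powerset_card S (fun j => Fw f (j + j % 2))]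
        unfold SS DD
        apply Finset.sum_congr rfl
        intro i _
        rw [Finset.sum_range_one]
        have harg : i + (i + 0) % 2 + 0 = i + i % 2 := by omega
        simp only [Nat.choose_self, Nat.cast_one, one_mul, Nat.choose_zero_right, harg]
      rw [hanf2]
      rcases Nat.mod_two_eq_zero_or_one S.card with hpar | hpar
      · obtain ⟨c, hc⟩ : ∃ c, S.card = 2 * c := ⟨S.card / 2, by omega⟩
        rw [hc, SS_even (Fw f) 0 c 0 (by omega)]
        exact c_high_zero f hsym hdeg (2 * c + 0) (by omega) (by omega)
      · obtain ⟨c, hc⟩ : ∃ c, S.card = 2 * c + 1 := ⟨S.card / 2, by omega⟩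
        rw [hc, SS_odd0 (Fw f) c 0]
        exact c_high_zero f hsym hdeg (2 * c + 1 + 0 + 1) (by omega) (by omega)
    apply lt_of_le_of_lt hbound
    rw [Nat.cast_withBot, Nat.cast_withBot]
    exact WithBot.coe_lt_coe.mpr (by omega)

end S15aux

/-- STATEMENT 15: let `f` be a symmetric Boolean function in `n` variables of degree `r` with
`2 ≤ r ≤ n-2`. If `r` is even then `f` has no degree-drop hyperplane; if `r` is odd then `f`
has exactly one degree-drop linear hyperplane, namely `{x | x₁ + ⋯ + xₙ = 0}` (that is, for
nonzero `a`, the hyperplane `{x | a·x = 0}` is degree-drop iff `a` is the all-ones vector). -/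
theorem stmt15 {n r : ℕ} (hr2 : 2 ≤ r) (hrn : r ≤ n - 2)
    (f : BF n)
    (hsym : ∀ π : Equiv.Perm (Fin n), ∀ x : Fin n → ZMod 2, f (x ∘ π) = f x)
    (hdeg : degB f = (r : WithBot ℕ)) :
    (Even r → ¬ HasDDS f 1) ∧
    (Odd r → ∀ a : Fin n → ZMod 2, a ≠ 0 →
      (DegreeDropSet f 1 {x | ∑ i, a i * x i = 0} ↔ a = fun _ => 1)) := by
  classical
  have hn : r + 2 ≤ n := by omega
  constructor
  · intro hEven
    rintro ⟨A, φ, hφaff, hφinj, hφrange, hφdrop⟩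
    obtain ⟨a, εZ, hane, hrange⟩ := S15aux.range_eq_hyperplane (by omega) φ hφaff hφinj
    exact S15aux.nodrop_main hr2 hn f hsym hdeg a εZ hane
      (Or.inl (Nat.even_iff.mp hEven)) φ hφaff hφinj hrange hφdrop
  · intro hOdd a haZ
    constructor
    · intro hdds
      by_contra hne
      obtain ⟨φ, hφaff, hφinj, hφrange, hφdrop⟩ := hdds
      have hWne : (Finset.univ.filter (fun i => a i = 1)) ≠ Finset.univ := by
        intro hEq
        apply hne
        funext i
        have h1 : i ∈ Finset.univ.filter (fun i => a i = 1) := by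
          rw [hEq]; exact Finset.mem_univ i
        exact (Finset.mem_filter.mp h1).2
      have hWlt : (Finset.univ.filter (fun i => a i = 1)).card < n := by
        have hss : (Finset.univ.filter (fun i => a i = 1)) ⊂ Finset.univ :=
          (Finset.ssubset_iff_subset_ne).mpr ⟨Finset.subset_univ _, hWne⟩
        have := Finset.card_lt_card hss
        simpa using this
      exact S15aux.nodrop_main hr2 hn f hsym hdeg a 0 haZ (Or.inr hWlt) φ hφaff hφinj
        hφrange hφdrop
    · intro ha1
      have hset : {x : Fin n → ZMod 2 | ∑ i, a i * x i = 0}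
          = {x : Fin n → ZMod 2 | ∑ i, x i = 0} := by
        rw [ha1]
        ext x
        simp
      rw [hset]
      exact S15aux.drop_allones hr2 hn f hsym hdeg (Nat.odd_iff.mp hOdd)
end

section
/- Let f be a homogeneous Boolean function of degree r in n variables with 1 ≤ r ≤ n-1 and let a ∈ F_2^n be nonzero. Then the linear hyperplane {x ∈ F_2^n : a·x = 0} is a degree-drop hyperplane for f if and only if a is a fast point for the complement f^c. Consequently, the number of degree-drop linear hyperplanes of f equals the number of fast points of f^c. -/
open Finset

section Dev
variable {n : ℕ}

/-- indicator vector of a set of coordinates -/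
def ind {n : ℕ} (T : Finset (Fin n)) : Fin n → ZMod 2 := fun i => if i ∈ T then 1 else 0

/-- monomial function -/
def mon {n : ℕ} (S : Finset (Fin n)) : BF n := fun x => ∏ i ∈ S, x i

/-- function with given ANF coefficients -/
def toF {n : ℕ} (c : Finset (Fin n) → ZMod 2) : BF n :=
  fun x => ∑ S : Finset (Fin n), c S * mon S x

lemma anf_apply (f : BF n) (S : Finset (Fin n)) :
    anf f S = ∑ T ∈ S.powerset, f (ind T) := rfl

lemma zmod2_sq (x : ZMod 2) : x * x = x := by revert x; decide

lemma zmod2_ne_zero {x : ZMod 2} (h : x ≠ 0) : x = 1 := by revert h; revert x; decide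

lemma mon_ind (S T : Finset (Fin n)) : mon S (ind T) = if S ⊆ T then 1 else 0 := by
  by_cases h : S ⊆ T
  · simp only [h, if_true, mon]
    apply Finset.prod_eq_one
    intro i hi
    simp [ind, h hi]
  · simp only [h, if_false, mon]
    obtain ⟨i, hiS, hiT⟩ : ∃ i ∈ S, i ∉ T := by
      by_contra hc; push_neg at hc; exact h hc
    exact Finset.prod_eq_zero hiS (by simp [ind, hiT])

lemma card_filter_superset {S T : Finset (Fin n)} (h : S ⊆ T) :
    (T.powerset.filter (fun R => S ⊆ R)).card = 2 ^ (T \ S).card := by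
  rw [← Finset.card_powerset]
  apply Finset.card_nbij' (fun R => R \ S) (fun R => R ∪ S)
  · intro R hR
    simp only [Finset.mem_coe, Finset.mem_filter, Finset.mem_powerset] at hR
    simp only [Finset.mem_coe, Finset.mem_powerset]
    exact Finset.sdiff_subset_sdiff hR.1 (le_refl S)
  · intro R hR
    simp only [Finset.mem_coe, Finset.mem_powerset] at hR
    simp only [Finset.mem_coe, Finset.mem_filter, Finset.mem_powerset]
    constructor
    · exact Finset.union_subset (hR.trans (Finset.sdiff_subset)) h
    · exact Finset.subset_union_right
  · intro R hR
    simp only [Finset.mem_coe, Finset.mem_filter, Finset.mem_powerset] at hR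
    exact Finset.sdiff_union_of_subset hR.2
  · intro R hR
    simp only [Finset.mem_coe, Finset.mem_powerset] at hR
    have : Disjoint R S := Finset.disjoint_of_subset_left hR Finset.sdiff_disjoint
    show (R ∪ S) \ S = R
    rw [Finset.union_sdiff_right, Finset.sdiff_eq_self_of_disjoint this]

lemma anf_toF (c : Finset (Fin n) → ZMod 2) : anf (toF c) = c := by
  funext T
  rw [anf_apply]
  simp only [toF]
  rw [Finset.sum_comm]
  have : ∀ S : Finset (Fin n),
      (∑ T' ∈ T.powerset, c S * mon S (ind T')) = c S * (if S = T then 1 else 0) := by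
    intro S
    rw [← Finset.mul_sum]
    congr 1
    simp only [mon_ind]
    rw [Finset.sum_boole]
    by_cases hST : S ⊆ T
    · rw [show (T.powerset.filter (fun R => S ⊆ R)) = T.powerset.filter (fun R => S ⊆ R) from rfl]
      rw [card_filter_superset hST]
      by_cases hEq : S = T
      · subst hEq; simp
      · have hne : (T \ S).card ≠ 0 := by
          simp only [Finset.card_eq_zero, Ne, Finset.sdiff_eq_empty_iff_subset]
          intro hTS
          exact hEq (Finset.Subset.antisymm hST hTS)
        obtain ⟨k, hk⟩ := Nat.exists_eq_succ_of_ne_zero hne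
        rw [hk, if_neg hEq]
        push_cast
        rw [pow_succ]
        norm_num
        right
        exact CharTwo.two_eq_zero
    · have h1 : (T.powerset.filter (fun R => S ⊆ R)) = ∅ := by
        apply Finset.filter_false_of_mem
        intro R hR hSR
        exact hST (hSR.trans (Finset.mem_powerset.mp hR))
      have h2 : S ≠ T := fun hEq => hST (hEq ▸ Finset.Subset.refl S)
      simp [h1, h2]
  rw [Finset.sum_congr rfl (fun S _ => this S)]
  simp [Finset.sum_ite_eq' Finset.univ T (fun S => c S)]

lemma card_BF_eq : Fintype.card (Finset (Fin n) → ZMod 2) = Fintype.card (BF n) := by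
  simp [Fintype.card_fun]

lemma toF_bijective : Function.Bijective (toF : (Finset (Fin n) → ZMod 2) → BF n) := by
  rw [Fintype.bijective_iff_injective_and_card]
  refine ⟨fun c d h => ?_, card_BF_eq⟩
  rw [← anf_toF c, ← anf_toF d, h]

lemma toF_anf (f : BF n) : toF (anf f) = f := by
  obtain ⟨c, rfl⟩ := toF_bijective.2 f
  rw [anf_toF]

lemma mon_add_expand (U : Finset (Fin n)) (x a : Fin n → ZMod 2) :
    mon U (x + a) = ∑ V ∈ U.powerset, mon V x * ∏ i ∈ U \ V, a i := by
  simp only [mon, Pi.add_apply]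
  exact Finset.prod_add _ _ _

lemma anf_deriv1 (a : Fin n → ZMod 2) (f : BF n) (V : Finset (Fin n)) :
    anf (deriv1 a f) V =
      ∑ U ∈ Finset.univ.filter (fun U => V ⊂ U), anf f U * ∏ i ∈ U \ V, a i := by
  have key : deriv1 a f = toF (fun V =>
      ∑ U ∈ Finset.univ.filter (fun U => V ⊂ U), anf f U * ∏ i ∈ U \ V, a i) := by
    funext x
    have hf : ∀ y, f y = toF (anf f) y := fun y => by rw [toF_anf]
    simp only [deriv1, hf, toF]
    have step1 : ∀ U : Finset (Fin n), mon U (x + a) + mon U x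
        = ∑ V ∈ U.powerset.erase U, mon V x * ∏ i ∈ U \ V, a i := by
      intro U
      rw [mon_add_expand, ← Finset.sum_erase_add U.powerset _ (Finset.mem_powerset_self U)]
      rw [Finset.sdiff_self, Finset.prod_empty, mul_one, add_assoc, CharTwo.add_self_eq_zero,
        add_zero]
    calc (∑ S : Finset (Fin n), anf f S * mon S (x + a))
          + ∑ S : Finset (Fin n), anf f S * mon S x
        = ∑ U : Finset (Fin n), anf f U * (mon U (x + a) + mon U x) := by
          rw [← Finset.sum_add_distrib]; exact Finset.sum_congr rfl fun U _ => (mul_add _ _ _).symm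
      _ = ∑ U : Finset (Fin n), ∑ V ∈ U.powerset.erase U,
            anf f U * (mon V x * ∏ i ∈ U \ V, a i) := by
          exact Finset.sum_congr rfl fun U _ => by rw [step1, Finset.mul_sum]
      _ = ∑ V : Finset (Fin n), ∑ U ∈ Finset.univ.filter (fun U => V ⊂ U),
            anf f U * (mon V x * ∏ i ∈ U \ V, a i) := by
          apply Finset.sum_comm'
          intro U V
          simp only [Finset.mem_univ, true_and, and_true, Finset.mem_erase,
            Finset.mem_powerset, Finset.mem_filter]
          rw [Finset.ssubset_iff_subset_ne]
          tauto
      _ = ∑ V : Finset (Fin n),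
            (∑ U ∈ Finset.univ.filter (fun U => V ⊂ U), anf f U * ∏ i ∈ U \ V, a i)
              * mon V x := by
          refine Finset.sum_congr rfl fun V _ => ?_
          rw [Finset.sum_mul]
          refine Finset.sum_congr rfl fun U _ => ?_
          ring
  rw [key, anf_toF]

lemma degB_le_iff (f : BF n) (d : ℕ) :
    degB f ≤ (d : WithBot ℕ) ↔ ∀ S, anf f S ≠ 0 → S.card ≤ d := by
  rw [degB, Finset.sup_le_iff]
  constructor
  · intro h S hS
    exact_mod_cast h S (by simp [hS])
  · intro h S hS
    simp only [Finset.mem_filter] at hS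
    exact_mod_cast (Nat.cast_le (α := WithBot ℕ)).mpr (h S hS.2)

lemma degB_lt_iff (f : BF n) (d : ℕ) :
    degB f < (d : WithBot ℕ) ↔ ∀ S, d ≤ S.card → anf f S = 0 := by
  rw [degB, Finset.sup_lt_iff (by exact_mod_cast WithBot.bot_lt_coe d)]
  constructor
  · intro h S hS
    by_contra hne
    have := h S (by simp [hne])
    rw [Nat.cast_lt] at this
    omega
  · intro h S hS
    simp only [Finset.mem_filter] at hS
    have : S.card < d := by
      by_contra hc
      exact hS.2 (h S (by omega))
    exact_mod_cast this

lemma ind_eq_sum (T : Finset (Fin n)) : ind T = ∑ i ∈ T, ind {i} := by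
  funext j
  rw [Finset.sum_apply]
  simp only [ind, Finset.mem_singleton]
  rw [Finset.sum_ite_eq T j (fun _ => (1 : ZMod 2))]

lemma anf_deriv1_vanish {a : Fin n → ZMod 2} {f : BF n} {d : ℕ}
    (h : ∀ S : Finset (Fin n), d + 1 ≤ S.card → anf f S = 0)
    (S : Finset (Fin n)) (hS : d ≤ S.card) : anf (deriv1 a f) S = 0 := by
  rw [anf_deriv1]
  apply Finset.sum_eq_zero
  intro U hU
  simp only [Finset.mem_filter] at hU
  rw [h U (by have := Finset.card_lt_card hU.2; omega), zero_mul]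

lemma cube_sum_zero {ι : Type} [DecidableEq ι] (s : Finset ι) :
    ∀ (f : BF n), (∀ S : Finset (Fin n), s.card ≤ S.card → anf f S = 0) →
    ∀ (e : ι → (Fin n → ZMod 2)) (u : Fin n → ZMod 2),
      ∑ T ∈ s.powerset, f (u + ∑ i ∈ T, e i) = 0 := by
  induction s using Finset.induction_on with
  | empty =>
    intro f h e u
    have hanf : anf f = fun _ => (0 : ZMod 2) := funext fun S => h S (by simp)
    have hf : f = toF (fun _ => 0) := by rw [← toF_anf f, hanf]
    simp [hf, toF]
  | @insert a' s' ha ih =>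
    intro f h e u
    rw [Finset.sum_powerset_insert ha]
    have hcard : (insert a' s').card = s'.card + 1 := Finset.card_insert_of_notMem ha
    have hstep : ∀ T ∈ s'.powerset,
        f (u + ∑ i ∈ insert a' T, e i) = f ((u + ∑ i ∈ T, e i) + e a') := by
      intro T hT
      congr 1
      rw [Finset.sum_insert (fun hc => ha (Finset.mem_powerset.mp hT hc))]
      ring
    rw [Finset.sum_congr rfl hstep, ← Finset.sum_add_distrib]
    have : ∀ T ∈ s'.powerset, f (u + ∑ i ∈ T, e i) + f ((u + ∑ i ∈ T, e i) + e a')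
        = (deriv1 (e a') f) (u + ∑ i ∈ T, e i) := by
      intro T _
      simp only [deriv1]
      ring
    rw [Finset.sum_congr rfl this]
    exact ih (deriv1 (e a') f)
      (fun S hS => anf_deriv1_vanish (fun S' hS' => h S' (by omega)) S hS) e u

lemma degB_eq_bot_iff (f : BF n) : degB f = ⊥ ↔ ∀ S, anf f S = 0 := by
  rw [degB, Finset.sup_eq_bot_iff]
  constructor
  · intro h S
    by_contra hne
    exact WithBot.coe_ne_bot (h S (by simp [hne]))
  · intro h S hS
    simp only [Finset.mem_filter] at hS
    exact absurd (h S) hS.2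

lemma anf_comp_affine_vanish {m : ℕ} (φ : (Fin m → ZMod 2) → (Fin n → ZMod 2))
    (hφ : IsAffineMap φ) (g : BF n) (d : ℕ)
    (h : ∀ S : Finset (Fin n), d ≤ S.card → anf g S = 0) :
    ∀ S' : Finset (Fin m), d ≤ S'.card → anf (g ∘ φ) S' = 0 := by
  obtain ⟨L, b, rfl⟩ := hφ
  intro S' hS'
  rw [anf_apply]
  have : ∀ T ∈ S'.powerset, (g ∘ fun x => L x + b) (ind T)
      = g (b + ∑ i ∈ T, L (ind {i})) := by
    intro T _
    simp only [Function.comp]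
    rw [ind_eq_sum T, map_sum, add_comm]
  rw [Finset.sum_congr rfl this]
  exact cube_sum_zero S' g (fun S hS => h S (le_trans hS' hS)) _ b

lemma degB_comp_affine_le {m : ℕ} (g : BF n) (φ : (Fin m → ZMod 2) → (Fin n → ZMod 2))
    (hφ : IsAffineMap φ) : degB (g ∘ φ) ≤ degB g := by
  cases hd : degB g with
  | bot =>
    rw [degB_eq_bot_iff] at hd
    have hbot : degB (g ∘ φ) = ⊥ := (degB_eq_bot_iff _).mpr
      (fun S => anf_comp_affine_vanish φ hφ g 0 (fun S _ => hd S) S (Nat.zero_le _))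
    simp [hbot]
  | coe d =>
    suffices h2 : degB (g ∘ φ) ≤ (d : WithBot ℕ) by exact_mod_cast h2
    rw [degB_le_iff]
    intro S hS
    by_contra hc
    push_neg at hc
    have hv := anf_comp_affine_vanish φ hφ g (d + 1)
      (fun U hU => by
        by_contra hne
        have := (degB_le_iff g d).mp (by exact_mod_cast le_of_eq hd) U hne
        omega) S (by omega)
    exact hS hv

lemma pi_add_self {k : ℕ} (x : Fin k → ZMod 2) : x + x = 0 := by
  funext i
  exact CharTwo.add_self_eq_zero _

lemma IsAffineMap.compose {m p : ℕ} {φ : (Fin m → ZMod 2) → (Fin n → ZMod 2)}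
    {ψ : (Fin n → ZMod 2) → (Fin p → ZMod 2)} (hψ : IsAffineMap ψ) (hφ : IsAffineMap φ) :
    IsAffineMap (ψ ∘ φ) := by
  obtain ⟨L1, b1, rfl⟩ := hφ
  obtain ⟨L2, b2, rfl⟩ := hψ
  exact ⟨L2.comp L1, L2 b1 + b2, by funext x; simp [map_add, add_assoc]⟩

lemma affine_right_inverse {m : ℕ} (α : (Fin m → ZMod 2) → (Fin m → ZMod 2))
    (haff : IsAffineMap α) (hinj : Function.Injective α) :
    ∃ β : (Fin m → ZMod 2) → (Fin m → ZMod 2),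
      IsAffineMap β ∧ ∀ y, α (β y) = y := by
  obtain ⟨A, c, rfl⟩ := haff
  have hAinj : Function.Injective A := by
    intro x y hxy
    exact hinj (show A x + c = A y + c by rw [hxy])
  have hAbij : Function.Bijective A := Finite.injective_iff_bijective.mp hAinj
  let E := LinearEquiv.ofBijective A hAbij
  refine ⟨fun y => E.symm y + E.symm c, ⟨E.symm.toLinearMap, E.symm c, rfl⟩, fun y => ?_⟩
  have hE : ∀ z, A (E.symm z) = z := fun z => E.apply_symm_apply z
  show A (E.symm y + E.symm c) + c = y
  rw [map_add, hE, hE, add_assoc, pi_add_self, add_zero]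

lemma anf_add (f g : BF n) (S : Finset (Fin n)) :
    anf (fun x => f x + g x) S = anf f S + anf g S := by
  simp only [anf_apply]
  rw [← Finset.sum_add_distrib]

lemma anf_sum {ι : Type} (s : Finset ι) (F : ι → BF n) (S : Finset (Fin n)) :
    anf (fun x => ∑ k ∈ s, F k x) S = ∑ k ∈ s, anf (F k) S := by
  simp only [anf_apply]
  rw [Finset.sum_comm]

section Hyperplane

variable {m : ℕ} (j : Fin (m + 1)) (a : Fin (m + 1) → ZMod 2)

/-- the linear form on the small space -/
def lform : (Fin m → ZMod 2) → ZMod 2 := fun y => ∑ k, a (j.succAbove k) * y k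

/-- parametrization of the hyperplane `a · x = 0` -/
def hmap : (Fin m → ZMod 2) → (Fin (m + 1) → ZMod 2) :=
  fun y => j.insertNth (lform j a y) y

lemma hmap_same (y : Fin m → ZMod 2) : hmap j a y j = lform j a y := by
  simp [hmap]

lemma hmap_succAbove (y : Fin m → ZMod 2) (k : Fin m) :
    hmap j a y (j.succAbove k) = y k := by
  simp [hmap]

lemma hmap_cases (x : Fin (m+1) → ZMod 2) (y : Fin m → ZMod 2)
    (h1 : x j = lform j a y) (h2 : ∀ k, x (j.succAbove k) = y k) : x = hmap j a y := by
  funext i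
  rcases eq_or_ne i j with rfl | hij
  · rw [h1, hmap_same]
  · obtain ⟨k, rfl⟩ := Fin.exists_succAbove_eq hij
    rw [h2, hmap_succAbove]

lemma hmap_add (y z : Fin m → ZMod 2) :
    hmap j a (y + z) = hmap j a y + hmap j a z := by
  symm
  apply hmap_cases
  · simp only [Pi.add_apply, hmap_same, lform, Pi.add_apply]
    rw [← Finset.sum_add_distrib]
    exact Finset.sum_congr rfl fun k _ => by ring
  · intro k
    simp [hmap_succAbove]

lemma hmap_zero : hmap j a 0 = 0 := by
  symm
  apply hmap_cases
  · simp [lform]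
  · intro k; rfl

lemma hmap_affine : IsAffineMap (hmap j a) := by
  have hsmul : ∀ (c : ZMod 2) (y : Fin m → ZMod 2), hmap j a (c • y) = c • hmap j a y := by
    intro c y
    have hc : c = 0 ∨ c = 1 := by revert c; decide
    rcases hc with rfl | rfl
    · simp [hmap_zero]
    · simp
  exact ⟨{ toFun := hmap j a, map_add' := hmap_add j a, map_smul' := hsmul }, 0, by
    funext y
    show hmap j a y = hmap j a y + 0
    rw [add_zero]⟩

lemma hmap_inj : Function.Injective (hmap j a) := by
  intro y z h
  funext k
  rw [← hmap_succAbove j a y k, ← hmap_succAbove j a z k, h]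

lemma hmap_range (ha : a j = 1) :
    Set.range (hmap j a) = {x | ∑ i, a i * x i = 0} := by
  ext x
  simp only [Set.mem_range, Set.mem_setOf_eq]
  rw [Fin.sum_univ_succAbove (fun i => a i * x i) j]
  constructor
  · rintro ⟨y, rfl⟩
    rw [hmap_same, ha, one_mul]
    have : ∑ k, a (j.succAbove k) * hmap j a y (j.succAbove k) = lform j a y := by
      exact Finset.sum_congr rfl fun k _ => by rw [hmap_succAbove]
    rw [this, CharTwo.add_self_eq_zero]
  · intro hx
    refine ⟨fun k => x (j.succAbove k), ?_⟩
    symm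
    apply hmap_cases
    · rw [ha, one_mul] at hx
      have : lform j a (fun k => x (j.succAbove k)) = ∑ k, a (j.succAbove k) * x (j.succAbove k) := rfl
      rw [this]
      have h3 := CharTwo.add_eq_iff_eq_add.mp hx
      rw [zero_add] at h3
      exact h3
    · intro k; rfl


/-- image of a set of small coordinates in the big space -/
def pushS (S : Finset (Fin m)) : Finset (Fin (m + 1)) := S.image j.succAbove

lemma mem_pushS {S : Finset (Fin m)} {i : Fin (m + 1)} :
    i ∈ pushS j S ↔ ∃ k ∈ S, j.succAbove k = i := by
  simp [pushS]

lemma j_not_mem_pushS (S : Finset (Fin m)) : j ∉ pushS j S := by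
  rw [mem_pushS]
  rintro ⟨k, -, hk⟩
  exact Fin.succAbove_ne j k hk

lemma card_pushS (S : Finset (Fin m)) : (pushS j S).card = S.card :=
  Finset.card_image_of_injective S (Fin.succAbove_right_injective)

def pullS (U : Finset (Fin (m + 1))) : Finset (Fin m) :=
  Finset.univ.filter (fun k => j.succAbove k ∈ U)

lemma mem_pullS {U : Finset (Fin (m + 1))} {k : Fin m} :
    k ∈ pullS j U ↔ j.succAbove k ∈ U := by
  simp [pullS]

lemma pullS_pushS (S : Finset (Fin m)) : pullS j (pushS j S) = S := by
  ext k
  rw [mem_pullS, mem_pushS]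
  constructor
  · rintro ⟨k', hk', heq⟩
    rwa [← Fin.succAbove_right_injective heq]
  · exact fun h => ⟨k, h, rfl⟩

lemma pushS_pullS {U : Finset (Fin (m + 1))} (hU : j ∉ U) : pushS j (pullS j U) = U := by
  ext i
  rw [mem_pushS]
  constructor
  · rintro ⟨k, hk, rfl⟩
    exact (mem_pullS j).mp hk
  · intro hi
    have hij : i ≠ j := fun h => hU (h ▸ hi)
    obtain ⟨k, rfl⟩ := Fin.exists_succAbove_eq hij
    exact ⟨k, (mem_pullS j).mpr hi, rfl⟩

lemma pullS_insert (U : Finset (Fin (m + 1))) : pullS j (insert j U) = pullS j U := by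
  ext k
  rw [mem_pullS, mem_pullS, Finset.mem_insert]
  have := Fin.succAbove_ne j k
  tauto

/-- the equivalence between big-space subsets and pairs -/
def finsetEquiv : Finset (Fin m) × Bool ≃ Finset (Fin (m + 1)) where
  toFun p := if p.2 then insert j (pushS j p.1) else pushS j p.1
  invFun U := (pullS j U, j ∈ U)
  left_inv p := by
    rcases p with ⟨T, b⟩
    cases b
    · simp [pullS_pushS, j_not_mem_pushS]
    · simp [pullS_insert, pullS_pushS]
  right_inv U := by
    by_cases hj : j ∈ U
    · have h1 : pullS j U = pullS j (U.erase j) := by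
        ext k
        rw [mem_pullS, mem_pullS, Finset.mem_erase]
        have := Fin.succAbove_ne j k
        tauto
      have h2 : pushS j (pullS j U) = U.erase j := by
        rw [h1]; exact pushS_pullS j (Finset.notMem_erase j U)
      simp [hj, h2, Finset.insert_erase hj]
    · simp [hj, pushS_pullS j hj]

lemma sum_finset_split (G : Finset (Fin (m + 1)) → ZMod 2) :
    ∑ U : Finset (Fin (m + 1)), G U
      = ∑ T : Finset (Fin m), (G (pushS j T) + G (insert j (pushS j T))) := by
  rw [← Equiv.sum_comp (finsetEquiv j) G]
  rw [Fintype.sum_prod_type]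
  refine Finset.sum_congr rfl fun T _ => ?_
  rw [Fintype.sum_bool]
  simp only [finsetEquiv, Equiv.coe_fn_mk, if_pos, if_neg]
  rw [add_comm]
  rfl

lemma mon_hmap_push (T : Finset (Fin m)) (y : Fin m → ZMod 2) :
    mon (pushS j T) (hmap j a y) = mon T y := by
  simp only [mon, pushS]
  rw [Finset.prod_image (fun x _ y _ h => Fin.succAbove_right_injective h)]
  exact Finset.prod_congr rfl fun k _ => hmap_succAbove j a y k

lemma ymul_mon (k : Fin m) (T : Finset (Fin m)) (y : Fin m → ZMod 2) :
    y k * mon T y = mon (insert k T) y := by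
  by_cases hk : k ∈ T
  · rw [Finset.insert_eq_self.mpr hk]
    simp only [mon]
    rw [← Finset.mul_prod_erase T y hk, ← mul_assoc, zmod2_sq]
  · simp only [mon]
    rw [Finset.prod_insert hk]

lemma mon_hmap_insert (T : Finset (Fin m)) (y : Fin m → ZMod 2) :
    mon (insert j (pushS j T)) (hmap j a y)
      = ∑ k, a (j.succAbove k) * mon (insert k T) y := by
  simp only [mon]
  rw [Finset.prod_insert (j_not_mem_pushS j T)]
  have h1 : ∏ i ∈ pushS j T, hmap j a y i = mon T y := mon_hmap_push j a T y
  rw [h1, hmap_same, lform, Finset.sum_mul]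
  refine Finset.sum_congr rfl fun k _ => ?_
  rw [mul_assoc, ymul_mon]
  rfl

lemma filter_insert_eq (k : Fin m) (S : Finset (Fin m)) :
    Finset.univ.filter (fun T : Finset (Fin m) => insert k T = S)
      = if k ∈ S then ({S, S.erase k} : Finset (Finset (Fin m))) else ∅ := by
  ext T
  simp only [Finset.mem_filter, Finset.mem_univ, true_and]
  by_cases hk : k ∈ S
  · rw [if_pos hk]
    simp only [Finset.mem_insert, Finset.mem_singleton]
    constructor
    · intro hT
      by_cases hkT : k ∈ T
      · left; rw [← hT, Finset.insert_eq_self.mpr hkT]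
      · right; rw [← hT, Finset.erase_insert hkT]
    · rintro (rfl | rfl)
      · exact Finset.insert_eq_self.mpr hk
      · exact Finset.insert_erase hk
  · rw [if_neg hk]
    simp only [Finset.notMem_empty, iff_false]
    intro hT
    exact hk (hT ▸ Finset.mem_insert_self k T)

lemma sum_mon_insert (k : Fin m) (β : Finset (Fin m) → ZMod 2) (y : Fin m → ZMod 2) :
    ∑ T : Finset (Fin m), β T * mon (insert k T) y
      = ∑ S' : Finset (Fin m),
          (if k ∈ S' then β S' + β (S'.erase k) else 0) * mon S' y := by
  rw [← Finset.sum_fiberwise_of_maps_to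
    (g := fun T : Finset (Fin m) => insert k T) (t := Finset.univ)
    (fun T _ => Finset.mem_univ _)
    (fun T => β T * mon (insert k T) y)]
  refine Finset.sum_congr rfl fun S' _ => ?_
  have hfe := filter_insert_eq k S'
  by_cases hk : k ∈ S'
  · rw [hfe, if_pos hk, if_pos hk]
    have hne : S' ≠ S'.erase k := (Finset.erase_ne_self.mpr hk).symm
    rw [Finset.sum_pair hne]
    rw [Finset.insert_eq_self.mpr hk, Finset.insert_erase hk, add_mul]
  · rw [hfe, if_neg hk, if_neg hk, Finset.sum_empty, zero_mul]

lemma anf_comp_hmap {r : ℕ} (f : BF (m + 1)) (hhom : Homog f r)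
    (S : Finset (Fin m)) (hS : S.card = r) :
    anf (f ∘ hmap j a) S
      = anf f (pushS j S)
        + ∑ k ∈ S, a (j.succAbove k) * anf f (insert j (pushS j (S.erase k))) := by
  have key : f ∘ hmap j a = fun y =>
      (∑ T : Finset (Fin m), anf f (pushS j T) * mon T y)
      + ∑ k : Fin m, ∑ T : Finset (Fin m),
          (anf f (insert j (pushS j T)) * a (j.succAbove k)) * mon (insert k T) y := by
    funext y
    have h0 : (f ∘ hmap j a) y = ∑ U : Finset (Fin (m + 1)), anf f U * mon U (hmap j a y) := by
      conv_lhs => rw [Function.comp_apply, ← toF_anf f]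
      rfl
    rw [h0, sum_finset_split j (fun U => anf f U * mon U (hmap j a y)),
      Finset.sum_add_distrib]
    congr 1
    · exact Finset.sum_congr rfl fun T _ => by rw [mon_hmap_push]
    · rw [Finset.sum_comm]
      refine Finset.sum_congr rfl fun T _ => ?_
      rw [mon_hmap_insert, Finset.mul_sum]
      exact Finset.sum_congr rfl fun k _ => by ring
  rw [key, anf_add]
  congr 1
  · have h1 : (fun y => ∑ T : Finset (Fin m), anf f (pushS j T) * mon T y)
        = toF (fun T => anf f (pushS j T)) := rfl
    rw [h1, anf_toF]
  · rw [anf_sum]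
    have heach : ∀ k : Fin m,
        anf (fun y => ∑ T : Finset (Fin m),
          (anf f (insert j (pushS j T)) * a (j.succAbove k)) * mon (insert k T) y) S
        = if k ∈ S then a (j.succAbove k) * anf f (insert j (pushS j (S.erase k))) else 0 := by
      intro k
      have h2 : (fun y => ∑ T : Finset (Fin m),
          (anf f (insert j (pushS j T)) * a (j.succAbove k)) * mon (insert k T) y)
          = toF (fun S' => if k ∈ S' then
              (anf f (insert j (pushS j S')) * a (j.succAbove k))
              + (anf f (insert j (pushS j (S'.erase k))) * a (j.succAbove k)) else 0) := by
        funext y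
        rw [sum_mon_insert k (fun T => anf f (insert j (pushS j T)) * a (j.succAbove k)) y]
        rfl
      rw [h2, anf_toF]
      by_cases hk : k ∈ S
      · rw [if_pos hk, if_pos hk]
        have hz : anf f (insert j (pushS j S)) = 0 := by
          by_contra hne
          have hc := hhom _ hne
          rw [Finset.card_insert_of_notMem (j_not_mem_pushS j S), card_pushS] at hc
          omega
        rw [hz, zero_mul, zero_add]
        ring
      · simp [hk]
    rw [Finset.sum_congr rfl (fun k _ => heach k)]
    rw [Finset.sum_ite_mem Finset.univ S
      (fun k => a (j.succAbove k) * anf f (insert j (pushS j (S.erase k)))),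
      Finset.univ_inter]

lemma sym_double_sum_zero {ι : Type} [DecidableEq ι] (W : Finset ι) (F : ι → ι → ZMod 2)
    (hsym : ∀ k i, F k i = F i k) :
    ∑ k ∈ W, ∑ i ∈ W.erase k, F k i = 0 := by
  induction W using Finset.induction_on with
  | empty => simp
  | @insert w W hw ih =>
    rw [Finset.sum_insert hw, Finset.erase_insert hw]
    have h1 : ∀ k ∈ W, ∑ i ∈ (insert w W).erase k, F k i
        = F k w + ∑ i ∈ W.erase k, F k i := by
      intro k hk
      have hkw : w ≠ k := fun h => hw (h ▸ hk)
      rw [Finset.erase_insert_of_ne hkw,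
        Finset.sum_insert (fun hc => hw (Finset.mem_of_mem_erase hc))]
    rw [Finset.sum_congr rfl h1, Finset.sum_add_distrib, ih]
    have h2 : ∑ k ∈ W, F k w = ∑ i ∈ W, F w i :=
      Finset.sum_congr rfl fun k _ => hsym k w
    rw [add_zero, h2, CharTwo.add_self_eq_zero]

variable {r : ℕ} {f : BF (m + 1)}

/-- the `(∗)`-sum for a set `W` -/
def TSum (f : BF (m + 1)) (a : Fin (m + 1) → ZMod 2) (W : Finset (Fin (m + 1))) : ZMod 2 :=
  ∑ i ∈ W, a i * anf f (W.erase i)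

lemma TSum_insert_push (ha : a j = 1) (S : Finset (Fin m)) :
    TSum f a (insert j (pushS j S))
      = anf f (pushS j S)
        + ∑ k ∈ S, a (j.succAbove k) * anf f (insert j (pushS j (S.erase k))) := by
  rw [TSum, Finset.sum_insert (j_not_mem_pushS j S)]
  congr 1
  · rw [ha, one_mul, Finset.erase_insert (j_not_mem_pushS j S)]
  · rw [pushS, Finset.sum_image (fun x _ y _ h => Fin.succAbove_right_injective h)]
    refine Finset.sum_congr rfl fun k hk => ?_
    congr 1
    rw [Finset.erase_insert_of_ne (Fin.ne_succAbove j k)]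
    congr 1
    rw [pushS, Finset.image_erase (Fin.succAbove_right_injective) S k]

lemma starj_TSum (hstarj : ∀ S : Finset (Fin m), S.card = r →
      anf f (pushS j S)
        + ∑ k ∈ S, a (j.succAbove k) * anf f (insert j (pushS j (S.erase k))) = 0)
    (ha : a j = 1)
    (W : Finset (Fin (m + 1))) (hW : W.card = r + 1) (hjW : j ∈ W) :
    TSum f a W = 0 := by
  have hS : W = insert j (pushS j (pullS j (W.erase j))) := by
    rw [pushS_pullS j (Finset.notMem_erase j W), Finset.insert_erase hjW]
  have hcard : (pullS j (W.erase j)).card = r := by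
    have h1 : (pushS j (pullS j (W.erase j))).card = (pullS j (W.erase j)).card :=
      card_pushS j _
    rw [pushS_pullS j (Finset.notMem_erase j W), Finset.card_erase_of_mem hjW, hW] at h1
    omega
  rw [hS, TSum_insert_push j a ha]
  exact hstarj _ hcard

lemma star_equiv (hhom : Homog f r) (ha : a j = 1) :
    (∀ S : Finset (Fin m), S.card = r →
      anf f (pushS j S)
        + ∑ k ∈ S, a (j.succAbove k) * anf f (insert j (pushS j (S.erase k))) = 0)
    ↔ (∀ W : Finset (Fin (m + 1)), W.card = r + 1 → TSum f a W = 0) := by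
  constructor
  · intro hstarj W hW
    by_cases hjW : j ∈ W
    · exact starj_TSum j a hstarj ha W hW hjW
    · -- cancellation argument
      have hterm : ∀ k ∈ W, a k * TSum f a (insert j (W.erase k)) = 0 := by
        intro k hk
        rcases eq_or_ne (a k) 0 with h0 | h0
        · rw [h0, zero_mul]
        · have hcard : (insert j (W.erase k)).card = r + 1 := by
            rw [Finset.card_insert_of_notMem (fun hc => hjW (Finset.mem_of_mem_erase hc)),
              Finset.card_erase_of_mem hk, hW]
            omega
          rw [starj_TSum j a hstarj ha _ hcard (Finset.mem_insert_self j _), mul_zero]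
      have hzero : ∑ k ∈ W, a k * TSum f a (insert j (W.erase k)) = 0 :=
        Finset.sum_eq_zero hterm
      have hexpand : ∀ k ∈ W, a k * TSum f a (insert j (W.erase k))
          = a k * anf f (W.erase k)
            + ∑ i ∈ W.erase k, a k * a i * anf f (insert j ((W.erase k).erase i)) := by
        intro k hk
        have hjk : j ∉ W.erase k := fun hc => hjW (Finset.mem_of_mem_erase hc)
        rw [TSum, Finset.sum_insert hjk, Finset.erase_insert hjk, ha, one_mul, mul_add,
          Finset.mul_sum]
        congr 1
        refine Finset.sum_congr rfl fun i hi => ?_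
        have hij : j ≠ i := fun h => hjW (h ▸ Finset.mem_of_mem_erase hi)
        rw [Finset.erase_insert_of_ne hij]
        ring
      rw [Finset.sum_congr rfl hexpand, Finset.sum_add_distrib] at hzero
      have hsym : ∑ k ∈ W, ∑ i ∈ W.erase k,
          a k * a i * anf f (insert j ((W.erase k).erase i)) = 0 := by
        apply sym_double_sum_zero
        intro k i
        rw [Finset.erase_right_comm]
        ring
      rw [hsym, add_zero] at hzero
      rw [TSum]
      exact hzero
  · intro hstar S hS
    rw [← TSum_insert_push j a ha]
    apply hstar
    rw [Finset.card_insert_of_notMem (j_not_mem_pushS j S), card_pushS, hS]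

end Hyperplane

section Compl
variable {n : ℕ}

lemma bcompl_eq_toF (f : BF n) : bcompl f = toF (fun T => anf f Tᶜ) := by
  funext x
  symm
  calc toF (fun T => anf f Tᶜ) x
      = ∑ T : Finset (Fin n), anf f Tᶜ * mon T x := rfl
    _ = ∑ T ∈ Finset.univ.filter (fun T : Finset (Fin n) => anf f Tᶜ ≠ 0),
          anf f Tᶜ * mon T x := by
        symm
        apply Finset.sum_subset (Finset.filter_subset _ _)
        intro T _ hT
        simp only [Finset.mem_filter, Finset.mem_univ, true_and, not_not] at hT
        rw [hT, zero_mul]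
    _ = ∑ T ∈ Finset.univ.filter (fun T : Finset (Fin n) => anf f Tᶜ ≠ 0), mon T x := by
        refine Finset.sum_congr rfl fun T hT => ?_
        simp only [Finset.mem_filter] at hT
        rw [zmod2_ne_zero hT.2, one_mul]
    _ = ∑ S ∈ Finset.univ.filter (fun S : Finset (Fin n) => anf f S ≠ 0), mon Sᶜ x := by
        symm
        apply Finset.sum_nbij' (i := fun S => Sᶜ) (j := fun T => Tᶜ)
        · intro S hS
          simp only [Finset.mem_filter, Finset.mem_univ, true_and, compl_compl] at *
          exact hS
        · intro T hT
          simp only [Finset.mem_filter, Finset.mem_univ, true_and, compl_compl] at *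
          exact hT
        · intro S _; exact compl_compl S
        · intro T _; exact compl_compl T
        · intro S _; rfl
    _ = ∑ S ∈ Finset.univ.filter (fun S : Finset (Fin n) => anf f S ≠ 0),
          ∏ i ∈ Sᶜ, x i := rfl

lemma anf_bcompl (f : BF n) (T : Finset (Fin n)) : anf (bcompl f) T = anf f Tᶜ := by
  rw [bcompl_eq_toF, anf_toF]

lemma homog_card_compl {f : BF n} {r : ℕ} (hhom : Homog f r) {T : Finset (Fin n)}
    (h : anf (bcompl f) T ≠ 0) : T.card = n - r := by
  rw [anf_bcompl] at h
  have h1 := hhom _ h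
  have h2 : Tᶜ.card = n - T.card := by
    rw [Finset.card_compl, Fintype.card_fin]
  have h3 : T.card ≤ n := by
    have := Finset.card_le_univ T
    simpa using this
  omega

lemma degB_bcompl {f : BF n} {r : ℕ} (hhom : Homog f r)
    (hne : ∃ S, anf f S ≠ 0) :
    degB (bcompl f) = ((n - r : ℕ) : WithBot ℕ) := by
  obtain ⟨S₀, hS₀⟩ := hne
  have hmemne : anf (bcompl f) S₀ᶜ ≠ 0 := by
    rw [anf_bcompl, compl_compl]
    exact hS₀
  apply le_antisymm
  · rw [degB_le_iff]
    exact fun S hS => le_of_eq (homog_card_compl hhom hS)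
  · have hmem : S₀ᶜ ∈ Finset.univ.filter
        (fun S : Finset (Fin n) => anf (bcompl f) S ≠ 0) := by
      simp only [Finset.mem_filter, Finset.mem_univ, true_and]
      exact hmemne
    have hle := Finset.le_sup (f := fun S : Finset (Fin n) => (S.card : WithBot ℕ)) hmem
    rw [degB]
    refine le_trans (le_of_eq ?_) hle
    have hc : S₀ᶜ.card = n - r := homog_card_compl hhom hmemne
    show ((n - r : ℕ) : WithBot ℕ) = ((S₀ᶜ.card : ℕ) : WithBot ℕ)
    exact_mod_cast hc.symm

lemma anf_deriv_bcompl_high {f : BF n} {r : ℕ} (hhom : Homog f r)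
    (a : Fin n → ZMod 2) (V : Finset (Fin n)) (hV : n - r ≤ V.card) :
    anf (deriv1 a (bcompl f)) V = 0 := by
  rw [anf_deriv1]
  apply Finset.sum_eq_zero
  intro U hU
  simp only [Finset.mem_filter] at hU
  have : anf (bcompl f) U = 0 := by
    by_contra hne
    have := homog_card_compl hhom hne
    have hlt := Finset.card_lt_card hU.2
    omega
  rw [this, zero_mul]

lemma insert_sdiff_self_eq {V : Finset (Fin n)} {i : Fin n} (hi : i ∉ V) :
    (insert i V) \ V = {i} := by
  ext t
  simp only [Finset.mem_sdiff, Finset.mem_insert, Finset.mem_singleton]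
  constructor
  · rintro ⟨rfl | ht, htV⟩
    · rfl
    · exact absurd ht htV
  · rintro rfl
    exact ⟨Or.inl rfl, hi⟩

lemma anf_deriv_bcompl_eq {f : BF n} {r : ℕ} (hhom : Homog f r)
    (a : Fin n → ZMod 2) (V : Finset (Fin n)) (hV : V.card + 1 = n - r) :
    anf (deriv1 a (bcompl f)) V = ∑ i ∈ Vᶜ, a i * anf f (Vᶜ.erase i) := by
  rw [anf_deriv1]
  rw [← Finset.sum_subset
    (s₁ := (Finset.univ.filter (fun U => V ⊂ U)).filter
      (fun U : Finset (Fin n) => U.card = V.card + 1))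
    (Finset.filter_subset _ _)
    (fun U hU hU2 => by
      simp only [Finset.mem_filter] at hU
      have hz : anf (bcompl f) U = 0 := by
        by_contra hne
        have h1 := homog_card_compl hhom hne
        apply hU2
        simp only [Finset.mem_filter]
        exact ⟨⟨Finset.mem_univ U, hU.2⟩, by omega⟩
      rw [hz, zero_mul])]
  symm
  apply Finset.sum_bij (i := fun i _ => insert i V)
  · intro i hi
    simp only [Finset.mem_compl] at hi
    simp only [Finset.mem_filter]
    exact ⟨⟨Finset.mem_univ _, Finset.ssubset_insert hi⟩,
      Finset.card_insert_of_notMem hi⟩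
  · intro i hi i' hi' heq
    simp only [Finset.mem_compl] at hi hi'
    have : i ∈ insert i' V := heq ▸ Finset.mem_insert_self i V
    rcases Finset.mem_insert.mp this with h | h
    · exact h
    · exact absurd h hi
  · intro U hU
    simp only [Finset.mem_filter] at hU
    have hVU : V ⊆ U := hU.1.2.subset
    have hcard : (U \ V).card = 1 := by
      rw [Finset.card_sdiff_of_subset hVU, hU.2]
      omega
    obtain ⟨i, hi⟩ := Finset.card_eq_one.mp hcard
    have hiU : i ∈ U \ V := hi ▸ Finset.mem_singleton_self i
    have hiV : i ∉ V := (Finset.mem_sdiff.mp hiU).2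
    refine ⟨i, Finset.mem_compl.mpr hiV, ?_⟩
    have : V ∪ (U \ V) = U := Finset.union_sdiff_of_subset hVU
    rw [← this, hi, Finset.insert_eq, Finset.union_comm]
  · intro i hi
    simp only [Finset.mem_compl] at hi
    rw [anf_bcompl, Finset.compl_insert, insert_sdiff_self_eq hi,
      Finset.prod_singleton]
    ring

end Compl

lemma withbot_add_one_lt (x : WithBot ℕ) (c : ℕ) (hc : 1 ≤ c) :
    x + 1 < (c : WithBot ℕ) ↔ x < ((c - 1 : ℕ) : WithBot ℕ) := by
  induction x using WithBot.recBotCoe with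
  | bot =>
    constructor
    · intro _; rw [Nat.cast_withBot]; exact WithBot.bot_lt_coe _
    · intro _; rw [WithBot.bot_add, Nat.cast_withBot]; exact WithBot.bot_lt_coe _
  | coe k =>
    rw [Nat.cast_withBot, Nat.cast_withBot]
    have h1 : (WithBot.some k) + 1 = WithBot.some (k + 1) := by
      rw [show (1 : WithBot ℕ) = WithBot.some 1 from rfl]
      rw [← WithBot.coe_add]
    rw [h1, WithBot.coe_lt_coe, WithBot.coe_lt_coe]
    omega

lemma fastPoint_iff_star {n r : ℕ} (hr : 1 ≤ r) (hrn : r + 1 ≤ n) (f : BF n)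
    (hhom : Homog f r) (hne : ∃ S, anf f S ≠ 0) (a : Fin n → ZMod 2) (hane : a ≠ 0) :
    FastPoint (bcompl f) a ↔
      ∀ W : Finset (Fin n), W.card = r + 1 → ∑ i ∈ W, a i * anf f (W.erase i) = 0 := by
  have hg := degB_bcompl hhom hne
  rw [FastPoint, hg]
  rw [and_iff_right hane]
  have step1 : degB (deriv1 a (bcompl f)) + 1 < ((n - r : ℕ) : WithBot ℕ)
      ↔ degB (deriv1 a (bcompl f)) < ((n - r - 1 : ℕ) : WithBot ℕ) :=
    withbot_add_one_lt _ (n - r) (by omega)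
  rw [step1, degB_lt_iff]
  constructor
  · intro h W hW
    have hVcard : Wᶜ.card = n - r - 1 := by
      rw [Finset.card_compl, Fintype.card_fin, hW]
      omega
    have := h Wᶜ (le_of_eq hVcard.symm)
    rw [anf_deriv_bcompl_eq hhom a Wᶜ (by omega)] at this
    rwa [compl_compl] at this
  · intro h V hV
    rcases eq_or_lt_of_le hV with heq | hlt
    · rw [anf_deriv_bcompl_eq hhom a V (by omega)]
      apply h
      rw [Finset.card_compl, Fintype.card_fin, ← heq]
      have : V.card ≤ n := by
        have := Finset.card_le_univ V
        simpa using this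
      omega
    · exact anf_deriv_bcompl_high hhom a V (by omega)

end Dev
/-- STATEMENT 17: for a homogeneous `f` of degree `r` with `1 ≤ r ≤ n-1` and nonzero `a`,
the linear hyperplane `{x | a·x = 0}` is a degree-drop hyperplane for `f` iff `a` is a fast
point for `f^c`; consequently the number of degree-drop linear hyperplanes of `f` equals the
number of fast points of `f^c`. -/
theorem stmt17 {n r : ℕ} (hr1 : 1 ≤ r) (hrn : r ≤ n - 1)
    (f : BF n) (hhom : Homog f r) (hdeg : degB f = (r : WithBot ℕ)) :
    (∀ a : Fin n → ZMod 2, a ≠ 0 →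
      (DegreeDropSet f 1 {x | ∑ i, a i * x i = 0} ↔ FastPoint (bcompl f) a)) ∧
    Nat.card {a : Fin n → ZMod 2 //
        a ≠ 0 ∧ DegreeDropSet f 1 {x | ∑ i, a i * x i = 0}}
      = Nat.card {a : Fin n → ZMod 2 // FastPoint (bcompl f) a} := by
  have hn2 : 2 ≤ n := by omega
  obtain ⟨m, rfl⟩ : ∃ m, n = m + 1 := ⟨n - 1, by omega⟩
  have hrm : r + 1 ≤ m + 1 := by omega
  have hne : ∃ S, anf f S ≠ 0 := by
    by_contra hc
    push_neg at hc
    have hbot : degB f = ⊥ := (degB_eq_bot_iff f).mpr hc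
    rw [hdeg] at hbot
    simp at hbot
  have main : ∀ a : Fin (m + 1) → ZMod 2, a ≠ 0 →
      (DegreeDropSet f 1 {x | ∑ i, a i * x i = 0} ↔ FastPoint (bcompl f) a) := by
    intro a hane
    obtain ⟨j, hj⟩ : ∃ j, a j ≠ 0 := Function.ne_iff.mp hane
    have haj : a j = 1 := zmod2_ne_zero hj
    have hdds : DegreeDropSet f 1 {x | ∑ i, a i * x i = 0}
        ↔ degB (f ∘ hmap j a) < degB f := by
      constructor
      · rintro ⟨ψ, hψaff, hψinj, hψrange, hψdeg⟩
        let π : (Fin (m + 1) → ZMod 2) → (Fin m → ZMod 2) := fun x k => x (j.succAbove k)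
        let πL : ((Fin (m + 1) → ZMod 2) →ₗ[ZMod 2] (Fin m → ZMod 2)) :=
          { toFun := π, map_add' := fun _ _ => rfl, map_smul' := fun _ _ => rfl }
        have hαaff : IsAffineMap (π ∘ ψ) := by
          obtain ⟨L, b, hLb⟩ := hψaff
          exact ⟨πL.comp L, π b, by rw [hLb]; rfl⟩
        have hψ_eq : ∀ y, hmap j a ((π ∘ ψ) y) = ψ y := by
          intro y
          have hmem : ψ y ∈ Set.range (hmap j a) := by
            rw [hmap_range j a haj]
            rw [← hψrange]
            exact Set.mem_range_self y
          obtain ⟨z, hz⟩ := hmem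
          have hπ : (π ∘ ψ) y = z := by
            funext k
            show ψ y (j.succAbove k) = z k
            rw [← hz, hmap_succAbove]
          rw [hπ, hz]
        have hαinj : Function.Injective (π ∘ ψ) := by
          intro y1 y2 h
          apply hψinj
          rw [← hψ_eq y1, ← hψ_eq y2, h]
        obtain ⟨β, hβaff, hβinv⟩ := affine_right_inverse _ hαaff hαinj
        have hcomp : f ∘ hmap j a = (f ∘ ψ) ∘ β := by
          funext y
          show f (hmap j a y) = f (ψ (β y))
          rw [← hψ_eq (β y), hβinv y]
        rw [hcomp]
        exact lt_of_le_of_lt (degB_comp_affine_le (f ∘ ψ) β hβaff) hψdeg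
      · intro h
        exact ⟨hmap j a, hmap_affine j a, hmap_inj j a, hmap_range j a haj, h⟩
    have hstarj : degB (f ∘ hmap j a) < degB f
        ↔ (∀ S : Finset (Fin m), S.card = r →
            anf f (pushS j S)
              + ∑ k ∈ S, a (j.succAbove k) * anf f (insert j (pushS j (S.erase k))) = 0) := by
      rw [hdeg]
      constructor
      · intro h S hS
        rw [← anf_comp_hmap j a f hhom S hS]
        exact (degB_lt_iff _ r).mp h S (le_of_eq hS.symm)
      · intro h
        rw [degB_lt_iff]
        intro S hS
        rcases eq_or_lt_of_le hS with heq | hlt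
        · rw [anf_comp_hmap j a f hhom S heq.symm]
          exact h S heq.symm
        · exact anf_comp_affine_vanish (hmap j a) (hmap_affine j a) f (r + 1)
            (fun U hU => by
              by_contra hne2
              have := hhom U hne2
              omega) S (by omega)
    rw [hdds, hstarj, star_equiv j a hhom haj,
      fastPoint_iff_star hr1 hrm f hhom hne a hane]
    rfl
  refine ⟨main, Nat.card_congr (Equiv.subtypeEquivRight ?_)⟩
  intro a
  constructor
  · rintro ⟨hane, hdds⟩
    exact (main a hane).mp hdds
  · intro hfp
    exact ⟨hfp.1, (main a hfp.1).mpr hfp⟩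
end
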